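/- arXiv:2211.00035 — 12 statements merged into one kernel-verified Lean document; each statement's English description precedes it below -/
import Mathlib

section
/- The objective function φ_ℓ is bounded below on E. -/
open MeasureTheory

/-- The objective function `φ_ℓ` is bounded below on `E`. -/
theorem stmt2 {E : Type*} [NormedAddCommGroup E] [NormedSpace ℝ E]
    [MeasurableSpace E] [BorelSpace E]
    (μ : Measure E) [IsProbabilityMeasure μ]
    (ℓ : E →L[ℝ] ℝ) (hℓ : ‖ℓ‖ < 1) :
    BddBelow (Set.range (fun α : E => (∫ x, (‖α - x‖ - ‖x‖) ∂μ) - ℓ α)) := by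
  set c : ℝ := ‖ℓ‖ with hc
  have hc0 : 0 ≤ c := norm_nonneg _
  set ε : ℝ := (1 - c) / 4 with hεdef
  have hε0 : 0 < ε := by simp only [hεdef]; linarith
  -- find R with small tail
  have hmeasA : ∀ n : ℕ, MeasurableSet {x : E | (n : ℝ) < ‖x‖} := by
    intro n
    exact measurableSet_lt measurable_const (measurable_norm)
  have hanti : Antitone (fun n : ℕ => {x : E | (n : ℝ) < ‖x‖}) := by
    intro m n hmn x hx
    simp only [Set.mem_setOf_eq] at *
    exact lt_of_le_of_lt (by exact_mod_cast Nat.cast_le.mpr hmn) hx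
  have hiInter : (⋂ n : ℕ, {x : E | (n : ℝ) < ‖x‖}) = ∅ := by
    ext x
    simp only [Set.mem_iInter, Set.mem_setOf_eq, Set.mem_empty_iff_false, iff_false, not_forall,
      not_lt]
    obtain ⟨n, hn⟩ := exists_nat_ge ‖x‖
    exact ⟨n, hn⟩
  have htend : Filter.Tendsto (fun n : ℕ => μ {x : E | (n : ℝ) < ‖x‖}) Filter.atTop (nhds 0) := by
    have := MeasureTheory.tendsto_measure_iInter_atTop (μ := μ)
      (fun n => (hmeasA n).nullMeasurableSet) hanti ⟨0, measure_ne_top μ _⟩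
    rwa [hiInter, measure_empty] at this
  have hev : ∀ᶠ n : ℕ in Filter.atTop, μ {x : E | (n : ℝ) < ‖x‖} < ENNReal.ofReal ε :=
    htend.eventually_lt_const (by simp [ENNReal.ofReal_pos, hε0])
  obtain ⟨n, hn⟩ := hev.exists
  set R : ℝ := (n : ℝ) with hRdef
  have hR0 : 0 ≤ R := Nat.cast_nonneg n
  set s : Set E := {x : E | ‖x‖ ≤ R} with hsdef
  have hsm : MeasurableSet s := measurableSet_le measurable_norm measurable_const
  have hsc : sᶜ = {x : E | R < ‖x‖} := by
    ext x; simp [hsdef, not_le]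
  set p : ℝ := (μ sᶜ).toReal with hpdef
  set q : ℝ := (μ s).toReal with hqdef
  have hpε : p < ε := by
    rw [hpdef, hsc]
    exact ENNReal.toReal_lt_of_lt_ofReal hn
  have hq1 : q ≤ 1 := by
    rw [hqdef]
    exact ENNReal.toReal_le_of_le_ofReal zero_le_one (by simpa using prob_le_one (μ := μ) (s := s))
  have hq0 : 0 ≤ q := ENNReal.toReal_nonneg
  have hp0 : 0 ≤ p := ENNReal.toReal_nonneg
  have hpq : q + p = 1 := by
    rw [hqdef, hpdef, ← ENNReal.toReal_add (measure_ne_top μ _) (measure_ne_top μ _),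
      measure_add_measure_compl hsm]
    simp
  refine ⟨-(2 * R), ?_⟩
  rintro y ⟨α, rfl⟩
  -- integrability
  have hcont : Continuous fun x : E => ‖α - x‖ - ‖x‖ := by continuity
  have hbd : ∀ x : E, ‖‖α - x‖ - ‖x‖‖ ≤ ‖α‖ := by
    intro x
    have := abs_norm_sub_norm_le (α - x) (-x)
    simpa [sub_neg_eq_add, sub_add_cancel, Real.norm_eq_abs] using this
  have hint : Integrable (fun x : E => ‖α - x‖ - ‖x‖) μ := by
    refine (integrable_const ‖α‖).mono' hcont.aestronglyMeasurable ?_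
    exact Filter.Eventually.of_forall hbd
  -- split integral
  have hsplit : (∫ x, (‖α - x‖ - ‖x‖) ∂μ)
      = (∫ x in s, (‖α - x‖ - ‖x‖) ∂μ) + ∫ x in sᶜ, (‖α - x‖ - ‖x‖) ∂μ :=
    (integral_add_compl hsm hint).symm
  have hlow1 : q * (‖α‖ - 2 * R) ≤ ∫ x in s, (‖α - x‖ - ‖x‖) ∂μ := by
    have h1 : ∫ x in s, (‖α‖ - 2 * R) ∂μ = q * (‖α‖ - 2 * R) := by
      rw [setIntegral_const]; simp [hqdef, smul_eq_mul, Measure.real]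
    rw [← h1]
    refine setIntegral_mono_on ((integrableOn_const_iff (hC := by finiteness)).mpr (Or.inr (measure_lt_top μ s)))
      hint.integrableOn hsm ?_
    intro x hx
    have hx' : ‖x‖ ≤ R := hx
    have h2 : ‖α‖ - ‖x‖ ≤ ‖α - x‖ := by
      have := norm_sub_norm_le α x
      linarith [norm_sub_norm_le α x]
    linarith
  have hlow2 : p * (-‖α‖) ≤ ∫ x in sᶜ, (‖α - x‖ - ‖x‖) ∂μ := by
    have h1 : ∫ x in sᶜ, (-‖α‖) ∂μ = p * (-‖α‖) := by
      rw [setIntegral_const]; simp [hpdef, smul_eq_mul, Measure.real]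
    rw [← h1]
    refine setIntegral_mono_on ((integrableOn_const_iff (hC := by finiteness)).mpr (Or.inr (measure_lt_top μ _)))
      hint.integrableOn hsm.compl ?_
    intro x _
    have := hbd x
    have := abs_le.mp (by simpa [Real.norm_eq_abs] using this)
    linarith [this.1]
  have hℓα : ℓ α ≤ c * ‖α‖ := le_trans (le_abs_self _) (by
    simpa [Real.norm_eq_abs] using ℓ.le_opNorm α)
  have hαn : 0 ≤ ‖α‖ := norm_nonneg α
  have key : q * (‖α‖ - 2 * R) + p * (-‖α‖) - c * ‖α‖ ≤
      (∫ x, (‖α - x‖ - ‖x‖) ∂μ) - ℓ α := by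
    rw [hsplit]; linarith
  refine le_trans ?_ key
  nlinarith [mul_nonneg hαn (by nlinarith : (0:ℝ) ≤ q - p - c), mul_nonneg hR0 (by linarith : (0:ℝ) ≤ 1 - q)]
end

section
/- Let X be a real random variable with law μ, ℓ ∈ (-1,1), p = (1+ℓ)/2, and φ(α) = E[|α - X| - |X|] - ℓα. Then α minimizes φ if and only if P(X ≤ α) ≥ p and P(X ≥ α) ≥ 1 - p. Moreover the set of minimizers is a nonempty closed bounded interval. -/
open MeasureTheory Set Filter Topology ENNReal

lemma g_meas (x : ℝ) : Measurable (fun t : ℝ => if x ≤ t then (1:ℝ) else -1) := by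
  exact Measurable.ite measurableSet_Ici measurable_const measurable_const

lemma g_intInt (x a b : ℝ) :
    IntervalIntegrable (fun t => if x ≤ t then (1:ℝ) else -1) volume a b := by
  rw [intervalIntegrable_iff, Set.uIoc_eq_union]
  haveI : IsFiniteMeasure (volume.restrict (Set.Ioc a b ∪ Set.Ioc b a)) := by
    constructor
    rw [Measure.restrict_apply_univ]
    exact (measure_union_le _ _).trans_lt (by simp [Real.volume_Ioc, ENNReal.add_lt_top])
  refine Integrable.mono' (integrable_const 1) ((g_meas x).aestronglyMeasurable.restrict) ?_
  filter_upwards with t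
  split <;> simp

lemma pt_le (x α β : ℝ) (hab : α ≤ β) :
    ∫ t in α..β, (if x ≤ t then (1:ℝ) else -1) = |β - x| - |α - x| := by
  rcases le_or_gt x α with hx | hx
  · have h : EqOn (fun t => if x ≤ t then (1:ℝ) else -1) (fun _ => 1) (uIcc α β) := by
      intro t ht
      have : α ≤ t := by
        rcases Set.mem_uIcc.1 ht with h | h
        · exact h.1
        · linarith [h.1]
      simp only [if_pos (hx.trans this)]
    rw [intervalIntegral.integral_congr h, intervalIntegral.integral_const]
    rw [abs_of_nonneg (by linarith), abs_of_nonneg (by linarith)]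
    simp
  · rcases le_or_gt β x with hx' | hx'
    · have h : ∀ᵐ t, t ∈ Set.uIoc α β → (if x ≤ t then (1:ℝ) else -1) = -1 := by
        filter_upwards [compl_mem_ae_iff.2 (Real.volume_singleton (a := x))] with t ht hmem
        have ht' : t ≠ x := ht
        have : t ≤ β := by
          rcases Set.mem_uIoc.1 hmem with h | h
          · exact h.2
          · linarith [h.2]
        have : t < x := lt_of_le_of_ne (this.trans hx') ht'
        rw [if_neg (not_le.2 this)]
      rw [intervalIntegral.integral_congr_ae h, intervalIntegral.integral_const]
      rw [abs_of_nonpos (by linarith), abs_of_nonpos (by linarith)]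
      simp
    · have hax : α ≤ x := hx.le
      have hxb : x ≤ β := hx'.le
      rw [← intervalIntegral.integral_add_adjacent_intervals (g_intInt x α x) (g_intInt x x β)]
      have h1 : ∫ t in α..x, (if x ≤ t then (1:ℝ) else -1) = α - x := by
        have h : ∀ᵐ t, t ∈ Set.uIoc α x → (if x ≤ t then (1:ℝ) else -1) = -1 := by
          filter_upwards [compl_mem_ae_iff.2 (Real.volume_singleton (a := x))] with t ht hmem
          have ht' : t ≠ x := ht
          have : t ≤ x := by
            rcases Set.mem_uIoc.1 hmem with h | h
            · exact h.2
            · linarith [h.2]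
          rw [if_neg (not_le.2 (lt_of_le_of_ne this ht'))]
        rw [intervalIntegral.integral_congr_ae h, intervalIntegral.integral_const]
        simp
      have h2 : ∫ t in x..β, (if x ≤ t then (1:ℝ) else -1) = β - x := by
        have h : EqOn (fun t => if x ≤ t then (1:ℝ) else -1) (fun _ => 1) (uIcc x β) := by
          intro t ht
          have : x ≤ t := by
            rcases Set.mem_uIcc.1 ht with h | h
            · exact h.1
            · linarith [h.1]
          simp only [if_pos this]
        rw [intervalIntegral.integral_congr h, intervalIntegral.integral_const]
        simp
      rw [h1, h2, abs_of_nonneg (by linarith), abs_of_nonpos (by linarith)]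
      ring

lemma pt (x α β : ℝ) :
    ∫ t in α..β, (if x ≤ t then (1:ℝ) else -1) = |β - x| - |α - x| := by
  rcases le_total α β with h | h
  · exact pt_le x α β h
  · rw [intervalIntegral.integral_symm, pt_le x β α h]; ring

lemma abs_int (μ : Measure ℝ) [IsProbabilityMeasure μ] (c : ℝ) :
    Integrable (fun x => |c - x| - |x|) μ := by
  refine Integrable.mono' (integrable_const |c|)
    (((continuous_const.sub continuous_id).abs.sub continuous_abs).aestronglyMeasurable) ?_
  filter_upwards with x
  have h := abs_abs_sub_abs_le_abs_sub (c - x) (-x)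
  simpa using h

lemma inner_int (μ : Measure ℝ) [IsProbabilityMeasure μ] (t : ℝ) :
    ∫ x, (if x ≤ t then (1:ℝ) else -1) ∂μ = 2 * (μ (Iic t)).toReal - 1 := by
  have he : (fun x => if x ≤ t then (1:ℝ) else -1)
      = fun x => (Iic t).indicator (fun _ => (2:ℝ)) x - 1 := by
    funext x; by_cases h : x ≤ t <;> simp [Set.indicator_apply, h] <;> norm_num
  rw [he, integral_sub ((integrable_const (2:ℝ)).indicator measurableSet_Iic) (integrable_const 1),
    integral_indicator_const _ measurableSet_Iic]
  simp [mul_comm]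
  rfl

lemma fubini (μ : Measure ℝ) [IsProbabilityMeasure μ] (α β : ℝ) (hab : α ≤ β) :
    ∫ x, (|β - x| - |α - x|) ∂μ = ∫ t in α..β, (2 * (μ (Iic t)).toReal - 1) := by
  have h1 : ∀ x : ℝ, |β - x| - |α - x| = ∫ t in Ioc α β, (if x ≤ t then (1:ℝ) else -1) := by
    intro x; rw [← intervalIntegral.integral_of_le hab, pt]
  have hInt : Integrable (Function.uncurry fun (x t : ℝ) => if x ≤ t then (1:ℝ) else -1)
      (μ.prod (volume.restrict (Ioc α β))) := by
    refine Integrable.mono' (integrable_const 1) ?_ ?_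
    · exact (Measurable.ite (measurableSet_le measurable_fst measurable_snd)
        measurable_const measurable_const).aestronglyMeasurable
    · filter_upwards with z
      rcases z with ⟨x, t⟩
      simp only [Function.uncurry]
      split <;> simp
  calc ∫ x, (|β - x| - |α - x|) ∂μ
      = ∫ x, (∫ t in Ioc α β, (if x ≤ t then (1:ℝ) else -1)) ∂μ :=
        by exact integral_congr_ae (ae_of_all _ h1)
    _ = ∫ t in Ioc α β, (∫ x, (if x ≤ t then (1:ℝ) else -1) ∂μ) :=
        by exact integral_integral_swap hInt
    _ = ∫ t in Ioc α β, (2 * (μ (Iic t)).toReal - 1) :=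
        integral_congr_ae (ae_of_all _ fun t => inner_int μ t)
    _ = ∫ t in α..β, (2 * (μ (Iic t)).toReal - 1) := (intervalIntegral.integral_of_le hab).symm

lemma F_mono (μ : Measure ℝ) [IsProbabilityMeasure μ] :
    Monotone (fun t => (μ (Iic t)).toReal) := fun s t hst =>
  ENNReal.toReal_mono (measure_ne_top μ _) (measure_mono (Iic_subset_Iic.2 hst))

lemma phi_sub_le (μ : Measure ℝ) [IsProbabilityMeasure μ] (ℓ p : ℝ) (hp : p = (1 + ℓ) / 2)
    (φ : ℝ → ℝ) (hφ : ∀ α, φ α = (∫ x, (|α - x| - |x|) ∂μ) - ℓ * α)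
    (α β : ℝ) (hab : α ≤ β) :
    φ β - φ α = ∫ t in α..β, (2 * ((μ (Iic t)).toReal - p)) := by
  have hsub : (∫ x, (|β - x| - |x|) ∂μ) - (∫ x, (|α - x| - |x|) ∂μ)
      = ∫ x, (|β - x| - |α - x|) ∂μ := by
    rw [← integral_sub (abs_int μ β) (abs_int μ α)]
    congr 1; funext x; ring
  have hmono : Monotone (fun t => 2 * (μ (Iic t)).toReal - 1) := by
    intro s t hst
    have := F_mono μ hst
    dsimp only; linarith
  have h3 : ∫ t in α..β, (2 * ((μ (Iic t)).toReal - p))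
      = (∫ t in α..β, (2 * (μ (Iic t)).toReal - 1)) - ℓ * (β - α) := by
    have : ∀ t, 2 * ((μ (Iic t)).toReal - p) = (2 * (μ (Iic t)).toReal - 1) - ℓ := by
      intro t; rw [hp]; ring
    simp_rw [this]
    rw [intervalIntegral.integral_sub hmono.intervalIntegrable (intervalIntegrable_const),
      intervalIntegral.integral_const]
    simp [mul_comm]
  rw [hφ, hφ, h3, ← fubini μ α β hab]
  linarith
lemma phi_sub (μ : Measure ℝ) [IsProbabilityMeasure μ] (ℓ p : ℝ) (hp : p = (1 + ℓ) / 2)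
    (φ : ℝ → ℝ) (hφ : ∀ α, φ α = (∫ x, (|α - x| - |x|) ∂μ) - ℓ * α)
    (α β : ℝ) :
    φ β - φ α = ∫ t in α..β, (2 * ((μ (Iic t)).toReal - p)) := by
  rcases le_total α β with h | h
  · exact phi_sub_le μ ℓ p hp φ hφ α β h
  · have := phi_sub_le μ ℓ p hp φ hφ β α h
    rw [intervalIntegral.integral_symm]
    linarith



lemma min_iff (μ : Measure ℝ) [IsProbabilityMeasure μ] (ℓ p : ℝ)
    (hℓ : ℓ ∈ Set.Ioo (-1 : ℝ) 1) (hp : p = (1 + ℓ) / 2)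
    (φ : ℝ → ℝ) (hφ : ∀ α, φ α = (∫ x, (|α - x| - |x|) ∂μ) - ℓ * α) (α : ℝ) :
    IsMinOn φ Set.univ α ↔
      (p ≤ (μ (Iic α)).toReal ∧ (μ (Iio α)).toReal ≤ p) := by
  have hp0 : 0 < p := by rw [hp]; linarith [hℓ.1]
  have hFmono := F_mono μ
  have hmono2 : Monotone (fun t => 2 * ((μ (Iic t)).toReal - p)) := by
    intro s t h; have := hFmono h; dsimp only; linarith
  rw [isMinOn_univ_iff]
  constructor
  · intro hmin
    have key : ∀ β, 0 ≤ ∫ t in α..β, (2 * ((μ (Iic t)).toReal - p)) := by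
      intro β
      have h1 := phi_sub μ ℓ p hp φ hφ α β
      have h2 := hmin β
      linarith
    constructor
    · by_contra hc
      push_neg at hc
      have hcdf : (ProbabilityTheory.cdf μ) α < p := by
        rw [ProbabilityTheory.cdf_eq_real]; exact hc
      have hev : {t | (ProbabilityTheory.cdf μ) t < p} ∈ nhdsWithin α (Ici α) :=
        (ProbabilityTheory.cdf μ).right_continuous α (Iio_mem_nhds hcdf)
      rw [Metric.mem_nhdsWithin_iff] at hev
      obtain ⟨ε, hε, hsub⟩ := hev
      have hδ : 0 < ε / 2 := by positivity
      have hmem : α + ε / 2 ∈ Metric.ball α ε ∩ Ici α := by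
        constructor
        · rw [Metric.mem_ball, Real.dist_eq, abs_of_nonneg (by linarith)]
          linarith
        · exact le_add_of_nonneg_right hδ.le
      have hFδ : (μ (Iic (α + ε / 2))).toReal < p := by
        have := hsub hmem
        rwa [Set.mem_setOf_eq, ProbabilityTheory.cdf_eq_real] at this
      have hle : ∫ t in α..(α + ε / 2), (2 * ((μ (Iic t)).toReal - p))
          ≤ ∫ t in α..(α + ε / 2), (fun _ => 2 * ((μ (Iic (α + ε / 2))).toReal - p)) t := by
        apply intervalIntegral.integral_mono_on (by linarith)
          hmono2.intervalIntegrable intervalIntegrable_const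
        intro t ht
        have := hFmono ht.2
        linarith
      rw [intervalIntegral.integral_const] at hle
      have hk := key (α + ε / 2)
      have : (α + ε / 2 - α) • (2 * ((μ (Iic (α + ε / 2))).toReal - p)) < 0 := by
        rw [smul_eq_mul]
        nlinarith
      linarith
    · by_contra hc
      push_neg at hc
      have hmonos : Monotone (fun n : ℕ => Iic (α - 1 / (n + 1))) := by
        intro m n hmn
        apply Iic_subset_Iic.2
        have h1 : (1:ℝ) / (n + 1) ≤ 1 / (m + 1) := by
          apply one_div_le_one_div_of_le (by positivity)
          have : (m:ℝ) ≤ n := Nat.cast_le.mpr hmn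
          linarith
        linarith
      have hU : ⋃ n : ℕ, Iic (α - 1 / (n + 1)) = Iio α := by
        ext x
        simp only [mem_iUnion, mem_Iic, mem_Iio]
        constructor
        · rintro ⟨n, hn⟩
          have : (0:ℝ) < 1 / (n + 1) := by positivity
          linarith
        · intro hx
          obtain ⟨n, hn⟩ := exists_nat_one_div_lt (by linarith : (0:ℝ) < α - x)
          exact ⟨n, by linarith⟩
      have htend := tendsto_measure_iUnion_atTop (μ := μ) hmonos
      rw [hU] at htend
      have hlt : ENNReal.ofReal p < μ (Iio α) :=
        (ENNReal.ofReal_lt_iff_lt_toReal hp0.le (measure_ne_top μ _)).2 hc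
      have hev : ∀ᶠ n : ℕ in atTop, μ (Iic (α - 1 / (n + 1))) ∈ Ioi (ENNReal.ofReal p) :=
        htend.eventually_mem (Ioi_mem_nhds hlt)
      obtain ⟨n, hn⟩ := hev.exists
      set t0 := α - 1 / ((n:ℝ) + 1) with ht0def
      have ht0 : t0 < α := by
        have : (0:ℝ) < 1 / ((n:ℝ) + 1) := by positivity
        rw [ht0def]; linarith
      have hFt0 : p < (μ (Iic t0)).toReal :=
        (ENNReal.ofReal_lt_iff_lt_toReal hp0.le (measure_ne_top μ _)).1 hn
      have key2 := key t0
      have hsym : ∫ t in α..t0, (2 * ((μ (Iic t)).toReal - p))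
          = -∫ t in t0..α, (2 * ((μ (Iic t)).toReal - p)) :=
        intervalIntegral.integral_symm _ _
      have hge : ∫ t in t0..α, (fun _ => 2 * ((μ (Iic t0)).toReal - p)) t
          ≤ ∫ t in t0..α, (2 * ((μ (Iic t)).toReal - p)) := by
        apply intervalIntegral.integral_mono_on ht0.le
          intervalIntegrable_const hmono2.intervalIntegrable
        intro t ht
        have := hFmono ht.1
        linarith
      rw [intervalIntegral.integral_const, smul_eq_mul] at hge
      nlinarith
  · rintro ⟨h1, h2⟩ β
    have hps := phi_sub μ ℓ p hp φ hφ α β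
    rcases le_total α β with hab | hba
    · have hnn : 0 ≤ ∫ t in α..β, (2 * ((μ (Iic t)).toReal - p)) := by
        apply intervalIntegral.integral_nonneg hab
        intro u hu
        have := hFmono hu.1
        linarith
      linarith
    · have hle : ∫ t in β..α, (2 * ((μ (Iic t)).toReal - p)) ≤ 0 := by
        rw [intervalIntegral.integral_of_le hba]
        apply integral_nonpos_of_ae
        filter_upwards [ae_restrict_mem measurableSet_Ioc,
          ae_restrict_of_ae (compl_mem_ae_iff.2 (Real.volume_singleton (a := α)))] with t ht htne
        have htlt : t < α := lt_of_le_of_ne ht.2 htne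
        have hsub : μ (Iic t) ≤ μ (Iio α) :=
          measure_mono (fun x hx => lt_of_le_of_lt hx htlt)
        have hF : (μ (Iic t)).toReal ≤ (μ (Iio α)).toReal :=
          ENNReal.toReal_mono (measure_ne_top μ _) hsub
        have : 2 * ((μ (Iic t)).toReal - p) ≤ 0 := by linarith
        simpa using this
      have hsym : ∫ t in α..β, (2 * ((μ (Iic t)).toReal - p))
          = -∫ t in β..α, (2 * ((μ (Iic t)).toReal - p)) :=
        intervalIntegral.integral_symm _ _
      linarith


lemma left_tendsto (μ : Measure ℝ) [IsProbabilityMeasure μ] (α : ℝ) :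
    Tendsto (fun n : ℕ => μ (Iic (α - 1 / (n + 1)))) atTop (𝓝 (μ (Iio α))) := by
  have hmonos : Monotone (fun n : ℕ => Iic (α - 1 / ((n:ℝ) + 1))) := by
    intro m n hmn
    apply Iic_subset_Iic.2
    have h1 : (1:ℝ) / (n + 1) ≤ 1 / (m + 1) := by
      apply one_div_le_one_div_of_le (by positivity)
      have : (m:ℝ) ≤ n := Nat.cast_le.mpr hmn
      linarith
    linarith
  have hU : ⋃ n : ℕ, Iic (α - 1 / ((n:ℝ) + 1)) = Iio α := by
    ext x
    simp only [mem_iUnion, mem_Iic, mem_Iio]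
    constructor
    · rintro ⟨n, hn⟩
      have : (0:ℝ) < 1 / ((n:ℝ) + 1) := by positivity
      linarith
    · intro hx
      obtain ⟨n, hn⟩ := exists_nat_one_div_lt (by linarith : (0:ℝ) < α - x)
      exact ⟨n, by linarith⟩
  have := tendsto_measure_iUnion_atTop (μ := μ) hmonos
  rwa [hU] at this

lemma right_tendsto (μ : Measure ℝ) [IsProbabilityMeasure μ] (α : ℝ) :
    Tendsto (fun n : ℕ => μ (Iic (α + 1 / (n + 1)))) atTop (𝓝 (μ (Iic α))) := by
  have hanti : Antitone (fun n : ℕ => Iic (α + 1 / ((n:ℝ) + 1))) := by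
    intro m n hmn
    apply Iic_subset_Iic.2
    have h1 : (1:ℝ) / (n + 1) ≤ 1 / (m + 1) := by
      apply one_div_le_one_div_of_le (by positivity)
      have : (m:ℝ) ≤ n := Nat.cast_le.mpr hmn
      linarith
    linarith
  have hI : ⋂ n : ℕ, Iic (α + 1 / ((n:ℝ) + 1)) = Iic α := by
    ext x
    simp only [mem_iInter, mem_Iic]
    constructor
    · intro h
      by_contra hc
      push_neg at hc
      obtain ⟨n, hn⟩ := exists_nat_one_div_lt (by linarith : (0:ℝ) < x - α)
      have := h n
      linarith
    · intro h n
      have : (0:ℝ) < 1 / ((n:ℝ) + 1) := by positivity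
      linarith
  have := tendsto_measure_iInter_atTop (μ := μ)
    (fun n => (measurableSet_Iic).nullMeasurableSet) hanti ⟨0, measure_ne_top μ _⟩
  rwa [hI] at this

lemma interval_part (μ : Measure ℝ) [IsProbabilityMeasure μ] (p : ℝ)
    (hp0 : 0 < p) (hp1 : p < 1) :
    ∃ a b : ℝ, a ≤ b ∧
      {α : ℝ | p ≤ (μ (Iic α)).toReal ∧ (μ (Iio α)).toReal ≤ p} = Icc a b := by
  have hFmono := F_mono μ
  set A := {α : ℝ | p ≤ (μ (Iic α)).toReal} with hA
  set B := {α : ℝ | (μ (Iio α)).toReal ≤ p} with hB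
  have htop : Tendsto (fun t => (μ (Iic t)).toReal) atTop (𝓝 1) :=
    (ProbabilityTheory.tendsto_cdf_atTop μ).congr
      (fun t => ProbabilityTheory.cdf_eq_real μ t)
  have hbot : Tendsto (fun t => (μ (Iic t)).toReal) atBot (𝓝 0) :=
    (ProbabilityTheory.tendsto_cdf_atBot μ).congr
      (fun t => ProbabilityTheory.cdf_eq_real μ t)
  obtain ⟨u, hu⟩ : ∃ u : ℝ, p < (μ (Iic u)).toReal :=
    (htop.eventually_mem (Ioi_mem_nhds hp1)).exists
  obtain ⟨l, hl⟩ : ∃ l : ℝ, (μ (Iic l)).toReal < p :=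
    (hbot.eventually_mem (Iio_mem_nhds hp0)).exists
  have hAne : A.Nonempty := ⟨u, hu.le⟩
  have hAbdd : BddBelow A := by
    refine ⟨l, fun α hα => ?_⟩
    by_contra h
    push_neg at h
    exact absurd (hα.trans (hFmono h.le)) (not_le.2 hl)
  set a := sInf A with ha
  have hA_each : ∀ n : ℕ, ENNReal.ofReal p ≤ μ (Iic (a + 1 / ((n:ℝ) + 1))) := by
    intro n
    have hlt : a < a + 1 / ((n:ℝ) + 1) := by
      have : (0:ℝ) < 1 / ((n:ℝ) + 1) := by positivity
      linarith
    obtain ⟨α, hαA, hα⟩ := (csInf_lt_iff hAbdd hAne).1 hlt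
    calc ENNReal.ofReal p ≤ μ (Iic α) :=
          (ENNReal.ofReal_le_iff_le_toReal (measure_ne_top μ _)).2 hαA
      _ ≤ μ (Iic (a + 1 / ((n:ℝ) + 1))) := measure_mono (Iic_subset_Iic.2 hα.le)
  have haA : a ∈ A := by
    have hle : ENNReal.ofReal p ≤ μ (Iic a) :=
      ge_of_tendsto' (right_tendsto μ a) hA_each
    exact (ENNReal.ofReal_le_iff_le_toReal (measure_ne_top μ _)).1 hle
  have hBne : B.Nonempty := by
    refine ⟨l, ?_⟩
    have : (μ (Iio l)).toReal ≤ (μ (Iic l)).toReal :=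
      ENNReal.toReal_mono (measure_ne_top μ _) (measure_mono Iio_subset_Iic_self)
    simp only [hB, mem_setOf_eq]
    linarith
  have hBbdd : BddAbove B := by
    refine ⟨u + 1, fun α hα => ?_⟩
    by_contra h
    push_neg at h
    have hsub : μ (Iic u) ≤ μ (Iio α) :=
      measure_mono (fun x hx => lt_of_le_of_lt (mem_Iic.1 hx) (by linarith))
    have := ENNReal.toReal_mono (measure_ne_top μ _) hsub
    have hαB : (μ (Iio α)).toReal ≤ p := hα
    linarith
  set b := sSup B with hb
  have hB_each : ∀ n : ℕ, μ (Iic (b - 1 / ((n:ℝ) + 1))) ≤ ENNReal.ofReal p := by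
    intro n
    have hlt : b - 1 / ((n:ℝ) + 1) < b := by
      have : (0:ℝ) < 1 / ((n:ℝ) + 1) := by positivity
      linarith
    obtain ⟨α, hαB, hα⟩ := (lt_csSup_iff hBbdd hBne).1 hlt
    calc μ (Iic (b - 1 / ((n:ℝ) + 1))) ≤ μ (Iio α) :=
          measure_mono (fun x hx => lt_of_le_of_lt (mem_Iic.1 hx) hα)
      _ ≤ ENNReal.ofReal p :=
          (ENNReal.le_ofReal_iff_toReal_le (measure_ne_top μ _) hp0.le).2 hαB
  have hbB : b ∈ B := by
    have hle : μ (Iio b) ≤ ENNReal.ofReal p :=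
      le_of_tendsto' (left_tendsto μ b) hB_each
    exact (ENNReal.le_ofReal_iff_toReal_le (measure_ne_top μ _) hp0.le).1 hle
  have haB : a ∈ B := by
    have h_each : ∀ n : ℕ, μ (Iic (a - 1 / ((n:ℝ) + 1))) ≤ ENNReal.ofReal p := by
      intro n
      have hlt : a - 1 / ((n:ℝ) + 1) < a := by
        have : (0:ℝ) < 1 / ((n:ℝ) + 1) := by positivity
        linarith
      have hnotA : (a - 1 / ((n:ℝ) + 1)) ∉ A := fun h => (csInf_le hAbdd h).not_gt hlt
      have hFlt : (μ (Iic (a - 1 / ((n:ℝ) + 1)))).toReal < p := by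
        simpa [hA, mem_setOf_eq, not_le] using hnotA
      exact (ENNReal.le_ofReal_iff_toReal_le (measure_ne_top μ _) hp0.le).2 hFlt.le
    have hle : μ (Iio a) ≤ ENNReal.ofReal p :=
      le_of_tendsto' (left_tendsto μ a) h_each
    exact (ENNReal.le_ofReal_iff_toReal_le (measure_ne_top μ _) hp0.le).1 hle
  have hab : a ≤ b := le_csSup hBbdd haB
  refine ⟨a, b, hab, ?_⟩
  ext α
  simp only [mem_setOf_eq, mem_Icc]
  constructor
  · rintro ⟨h1, h2⟩
    exact ⟨csInf_le hAbdd h1, le_csSup hBbdd h2⟩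
  · rintro ⟨hge, hle⟩
    constructor
    · exact le_trans haA (hFmono hge)
    · have : μ (Iio α) ≤ μ (Iio b) := measure_mono (Iio_subset_Iio hle)
      have h2 := ENNReal.toReal_mono (measure_ne_top μ _) this
      exact le_trans h2 hbB

/-- In the univariate case, `α` minimizes `φ` iff `P(X ≤ α) ≥ p` and `P(X ≥ α) ≥ 1 - p`,
and the set of minimizers is a nonempty closed bounded interval. -/
theorem stmt3 (μ : Measure ℝ) [IsProbabilityMeasure μ]
    (ℓ : ℝ) (hℓ : ℓ ∈ Set.Ioo (-1 : ℝ) 1)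
    (p : ℝ) (hp : p = (1 + ℓ) / 2)
    (φ : ℝ → ℝ) (hφ : ∀ α, φ α = (∫ x, (|α - x| - |x|) ∂μ) - ℓ * α) :
    (∀ α : ℝ, IsMinOn φ Set.univ α ↔
      ENNReal.ofReal p ≤ μ (Set.Iic α) ∧ ENNReal.ofReal (1 - p) ≤ μ (Set.Ici α)) ∧
    ∃ a b : ℝ, a ≤ b ∧ {α | IsMinOn φ Set.univ α} = Set.Icc a b := by
  have hp0 : 0 < p := by rw [hp]; linarith [hℓ.1]
  have hp1 : p < 1 := by rw [hp]; linarith [hℓ.2]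
  have hcompl : ∀ α : ℝ, (μ (Ici α)).toReal = 1 - (μ (Iio α)).toReal := by
    intro α
    have h1 : μ (Iio α) + μ (Iio α)ᶜ = μ univ := measure_add_measure_compl measurableSet_Iio
    rw [compl_Iio, measure_univ] at h1
    have h2 : (μ (Iio α) + μ (Ici α)).toReal = (1 : ℝ≥0∞).toReal := by rw [h1]
    rw [ENNReal.toReal_add (measure_ne_top μ _) (measure_ne_top μ _)] at h2
    simp at h2
    linarith
  have hiff : ∀ α : ℝ,
      (ENNReal.ofReal p ≤ μ (Iic α) ∧ ENNReal.ofReal (1 - p) ≤ μ (Ici α)) ↔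
        (p ≤ (μ (Iic α)).toReal ∧ (μ (Iio α)).toReal ≤ p) := by
    intro α
    rw [ENNReal.ofReal_le_iff_le_toReal (measure_ne_top μ _),
      ENNReal.ofReal_le_iff_le_toReal (measure_ne_top μ _), hcompl α]
    constructor <;> rintro ⟨h1, h2⟩ <;> exact ⟨h1, by linarith⟩
  constructor
  · intro α
    rw [min_iff μ ℓ p hℓ hp φ hφ α, hiff α]
  · obtain ⟨a, b, hab, hset⟩ := interval_part μ p hp0 hp1
    refine ⟨a, b, hab, ?_⟩
    rw [← hset]
    ext α
    simp only [mem_setOf_eq]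
    rw [min_iff μ ℓ p hℓ hp φ hφ α]
end

section
/- A Borel probability measure μ on ℝ has at least two geometric ℓ-quantiles if and only if there exist real numbers α₁ < α₂ with μ((-∞, α₁]) = p and μ([α₂, ∞)) = 1 - p, where p = (1+ℓ)/2. -/
open MeasureTheory


lemma integ_aux (μ : Measure ℝ) [IsProbabilityMeasure μ] (a b : ℝ) :
    Integrable (fun x => |a - x| - |b - x|) μ := by
  apply Integrable.mono' (integrable_const |a - b|)
  · exact (((continuous_const.sub continuous_id).abs.sub
      ((continuous_const.sub continuous_id).abs))).aestronglyMeasurable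
  · refine Filter.Eventually.of_forall fun x => ?_
    have h := abs_abs_sub_abs_le_abs_sub (a - x) (b - x)
    have : a - x - (b - x) = a - b := by ring
    rwa [this] at h

lemma integ_aux2 (μ : Measure ℝ) [IsProbabilityMeasure μ] (a : ℝ) :
    Integrable (fun x => |a - x| - |x|) μ := by
  have := integ_aux μ a 0
  simpa using this

lemma phi_diff (μ : Measure ℝ) [IsProbabilityMeasure μ] (ℓ : ℝ) (φ : ℝ → ℝ)
    (hφ : ∀ α, φ α = (∫ x, (|α - x| - |x|) ∂μ) - ℓ * α) (α β : ℝ) :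
    φ β - φ α = (∫ x, (|β - x| - |α - x|) ∂μ) - ℓ * (β - α) := by
  rw [hφ, hφ]
  have : (∫ x, (|β - x| - |x|) ∂μ) - (∫ x, (|α - x| - |x|) ∂μ)
      = ∫ x, (|β - x| - |α - x|) ∂μ := by
    rw [← integral_sub (integ_aux2 μ β) (integ_aux2 μ α)]
    congr 1
    ext x
    ring
  linarith [this]

lemma lower_bd (μ : Measure ℝ) [IsProbabilityMeasure μ] (ℓ : ℝ) (φ : ℝ → ℝ)
    (hφ : ∀ α, φ α = (∫ x, (|α - x| - |x|) ∂μ) - ℓ * α) {α β : ℝ} (hab : α < β) :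
    2 * (β - α) * ((μ (Set.Iic α)).toReal - (1 + ℓ)/2) ≤ φ β - φ α := by
  rw [phi_diff μ ℓ φ hφ]
  have hg : Integrable (fun x => (α - β) + Set.indicator (Set.Iic α) (fun _ => 2*(β-α)) x) μ :=
    (integrable_const _).add ((integrable_const _).indicator measurableSet_Iic)
  have hmono : (∫ x, ((α - β) + Set.indicator (Set.Iic α) (fun _ => 2*(β-α)) x) ∂μ)
      ≤ ∫ x, (|β - x| - |α - x|) ∂μ := by
    apply integral_mono hg (integ_aux μ β α)
    intro x
    by_cases hx : x ≤ α
    · simp only [Set.indicator_of_mem (Set.mem_Iic.mpr hx)]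
      rw [abs_of_nonneg (by linarith), abs_of_nonneg (by linarith)]
      ring_nf
      linarith
    · simp only [Set.indicator_of_notMem (fun h => hx (Set.mem_Iic.mp h)), add_zero]
      have h := abs_sub_abs_le_abs_sub (α - x) (β - x)
      have h2 : (α - x - (β - x) : ℝ) = α - β := by ring
      have h3 : |α - β| = β - α := by rw [abs_of_nonpos (by linarith : α - β ≤ 0)]; ring
      rw [h2, h3] at h
      linarith
  have hint : (∫ x, ((α - β) + Set.indicator (Set.Iic α) (fun _ => 2*(β-α)) x) ∂μ)
      = (α - β) + (μ (Set.Iic α)).toReal * (2*(β-α)) := by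
    rw [integral_add (integrable_const _) ((integrable_const _).indicator measurableSet_Iic),
      integral_const, integral_indicator_const _ measurableSet_Iic]
    simp [smul_eq_mul]
    exact Or.inl rfl
  rw [hint] at hmono
  linarith

lemma ici_toReal (μ : Measure ℝ) [IsProbabilityMeasure μ] (β : ℝ) :
    (μ (Set.Ici β)).toReal = 1 - (μ (Set.Iio β)).toReal := by
  have h : μ (Set.Ici β) = 1 - μ (Set.Iio β) := by
    rw [← Set.compl_Iio, measure_compl measurableSet_Iio (measure_ne_top μ _)]
    simp
  rw [h, ENNReal.toReal_sub_of_le prob_le_one ENNReal.one_ne_top]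
  simp

lemma upper_bd (μ : Measure ℝ) [IsProbabilityMeasure μ] (ℓ : ℝ) (φ : ℝ → ℝ)
    (hφ : ∀ α, φ α = (∫ x, (|α - x| - |x|) ∂μ) - ℓ * α) {α β : ℝ} (hab : α < β) :
    φ β - φ α ≤ 2 * (β - α) * ((μ (Set.Iio β)).toReal - (1 + ℓ)/2) := by
  rw [phi_diff μ ℓ φ hφ]
  have hg : Integrable (fun x => (β - α) + Set.indicator (Set.Ici β) (fun _ => 2*(α-β)) x) μ :=
    (integrable_const _).add ((integrable_const _).indicator measurableSet_Ici)
  have hmono : (∫ x, (|β - x| - |α - x|) ∂μ)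
      ≤ ∫ x, ((β - α) + Set.indicator (Set.Ici β) (fun _ => 2*(α-β)) x) ∂μ := by
    apply integral_mono (integ_aux μ β α) hg
    intro x
    by_cases hx : β ≤ x
    · simp only [Set.indicator_of_mem (Set.mem_Ici.mpr hx)]
      rw [abs_of_nonpos (by linarith), abs_of_nonpos (by linarith)]
      ring_nf
      linarith
    · simp only [Set.indicator_of_notMem (fun h => hx (Set.mem_Ici.mp h)), add_zero]
      have h := abs_sub_abs_le_abs_sub (β - x) (α - x)
      have h2 : (β - x - (α - x) : ℝ) = β - α := by ring
      have h3 : |β - α| = β - α := abs_of_nonneg (by linarith)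
      rw [h2, h3] at h
      linarith
  have hint : (∫ x, ((β - α) + Set.indicator (Set.Ici β) (fun _ => 2*(α-β)) x) ∂μ)
      = (β - α) + (μ (Set.Ici β)).toReal * (2*(α-β)) := by
    rw [integral_add (integrable_const _) ((integrable_const _).indicator measurableSet_Ici),
      integral_const, integral_indicator_const _ measurableSet_Ici]
    simp [smul_eq_mul]
    exact Or.inl rfl
  rw [hint, ici_toReal] at hmono
  linarith

lemma min_of (μ : Measure ℝ) [IsProbabilityMeasure μ] (ℓ : ℝ) (φ : ℝ → ℝ)
    (hφ : ∀ α, φ α = (∫ x, (|α - x| - |x|) ∂μ) - ℓ * α) {c : ℝ}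
    (hlo : (μ (Set.Iio c)).toReal ≤ (1 + ℓ)/2)
    (hhi : (1 + ℓ)/2 ≤ (μ (Set.Iic c)).toReal) :
    IsMinOn φ Set.univ c := by
  rw [isMinOn_iff]
  intro x _
  rcases lt_trichotomy c x with h | h | h
  · have := lower_bd μ ℓ φ hφ h
    nlinarith
  · rw [h]
  · have := upper_bd μ ℓ φ hφ h
    nlinarith

/-- `μ` has at least two geometric `ℓ`-quantiles iff there exist `α₁ < α₂` with
`μ((-∞, α₁]) = p` and `μ([α₂, ∞)) = 1 - p`, where `p = (1 + ℓ)/2`. -/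
theorem stmt4 (μ : Measure ℝ) [IsProbabilityMeasure μ]
    (ℓ : ℝ) (hℓ : ℓ ∈ Set.Ioo (-1 : ℝ) 1)
    (p : ℝ) (hp : p = (1 + ℓ) / 2)
    (φ : ℝ → ℝ) (hφ : ∀ α, φ α = (∫ x, (|α - x| - |x|) ∂μ) - ℓ * α) :
    (∃ a b : ℝ, a ≠ b ∧ IsMinOn φ Set.univ a ∧ IsMinOn φ Set.univ b) ↔
      ∃ α₁ α₂ : ℝ, α₁ < α₂ ∧ μ (Set.Iic α₁) = ENNReal.ofReal p ∧
        μ (Set.Ici α₂) = ENNReal.ofReal (1 - p) := by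
  obtain ⟨hl1, hl2⟩ := hℓ
  have hp0 : 0 < p := by rw [hp]; linarith
  have hp1 : p < 1 := by rw [hp]; linarith
  constructor
  · rintro ⟨a, b, hne, ha, hb⟩
    -- key: for any c strictly between two minimizers, Iio and Iic measures both equal p
    have key : ∀ a b : ℝ, a < b → IsMinOn φ Set.univ a → IsMinOn φ Set.univ b →
        ∀ c : ℝ, a < c → c < b →
        (μ (Set.Iio c)).toReal = p ∧ (μ (Set.Iic c)).toReal = p := by
      intro a b hab ha hb c hac hcb
      have h1 : φ b ≤ φ c := isMinOn_iff.mp hb c trivial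
      have h2 : φ a ≤ φ c := isMinOn_iff.mp ha c trivial
      have hlow := lower_bd μ ℓ φ hφ hcb
      have hup := upper_bd μ ℓ φ hφ hac
      have hG : (μ (Set.Iic c)).toReal ≤ p := by rw [hp]; nlinarith
      have hF : p ≤ (μ (Set.Iio c)).toReal := by rw [hp]; nlinarith
      have hle : (μ (Set.Iio c)).toReal ≤ (μ (Set.Iic c)).toReal :=
        ENNReal.toReal_le_toReal (measure_ne_top μ _) (measure_ne_top μ _) |>.mpr
          (measure_mono Set.Iio_subset_Iic_self)
      constructor <;> linarith
    rcases hne.lt_or_gt with hab | hab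
    all_goals {
      first
      | (have h1 := key a b hab ha hb (a + (b-a)/3) (by linarith) (by linarith)
         have h2 := key a b hab ha hb (a + 2*(b-a)/3) (by linarith) (by linarith)
         refine ⟨a + (b-a)/3, a + 2*(b-a)/3, by linarith, ?_, ?_⟩)
      | (have h1 := key b a hab hb ha (b + (a-b)/3) (by linarith) (by linarith)
         have h2 := key b a hab hb ha (b + 2*(a-b)/3) (by linarith) (by linarith)
         refine ⟨b + (a-b)/3, b + 2*(a-b)/3, by linarith, ?_, ?_⟩)
      · rw [← ENNReal.ofReal_toReal (measure_ne_top μ _), h1.2]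
      · rw [← ENNReal.ofReal_toReal (measure_ne_top μ _), ici_toReal, h2.1]
    }
  · rintro ⟨α₁, α₂, h12, hq1, hq2⟩
    have hG1 : (μ (Set.Iic α₁)).toReal = p := by
      rw [hq1, ENNReal.toReal_ofReal hp0.le]
    have hF2 : (μ (Set.Iio α₂)).toReal = p := by
      have := ici_toReal μ α₂
      rw [hq2, ENNReal.toReal_ofReal (by linarith)] at this
      linarith
    have hle1 : (μ (Set.Iio α₁)).toReal ≤ (μ (Set.Iic α₁)).toReal :=
      ENNReal.toReal_le_toReal (measure_ne_top μ _) (measure_ne_top μ _) |>.mpr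
        (measure_mono Set.Iio_subset_Iic_self)
    have hle2 : (μ (Set.Iio α₂)).toReal ≤ (μ (Set.Iic α₂)).toReal :=
      ENNReal.toReal_le_toReal (measure_ne_top μ _) (measure_ne_top μ _) |>.mpr
        (measure_mono Set.Iio_subset_Iic_self)
    refine ⟨α₁, α₂, ne_of_lt h12, ?_, ?_⟩
    · exact min_of μ ℓ φ hφ (by rw [← hp]; linarith) (by rw [← hp, ← hG1])
    · exact min_of μ ℓ φ hφ (by rw [← hp, ← hF2]) (by rw [← hp]; linarith)
end

section
/- A Borel probability measure μ on ℝ has a unique geometric ℓ-quantile if and only if the preimage F_X⁻¹({p}) of p = (1+ℓ)/2 under the CDF F_X is empty or a singleton. -/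
open MeasureTheory

section Aux

variable (μ : Measure ℝ) [IsProbabilityMeasure μ]

lemma aux_integrable (a : ℝ) : Integrable (fun x => |a - x| - |x|) μ := by
  refine Integrable.mono' (integrable_const |a|) ?_ ?_
  · exact (Continuous.sub ((continuous_const.sub continuous_id).abs) continuous_abs).aestronglyMeasurable
  · refine Filter.Eventually.of_forall (fun x => ?_)
    have := abs_abs_sub_abs_le_abs_sub (a - x) (-x)
    simpa using this

lemma aux_lower {α β : ℝ} (h : α ≤ β) :
    (β - α) * (2 * (μ (Set.Iic α)).toReal - 1) ≤ ∫ x, (|β - x| - |α - x|) ∂μ := by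
  set g : ℝ → ℝ := fun x => (Set.Iic α).indicator (fun _ => 2 * (β - α)) x - (β - α) with hg_def
  have hh : Integrable (fun x => |β - x| - |α - x|) μ := by
    have h0 := (aux_integrable μ β).sub (aux_integrable μ α)
    refine h0.congr (Filter.Eventually.of_forall fun x => ?_)
    simp only [Pi.sub_apply]; ring
  have hg : Integrable g μ :=
    ((integrable_const (2 * (β - α))).indicator measurableSet_Iic).sub (integrable_const (β - α))
  have hpt : ∀ x, g x ≤ |β - x| - |α - x| := by
    intro x
    by_cases hx : x ≤ α
    · have h1 : |β - x| = β - x := abs_of_nonneg (by linarith)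
      have h2 : |α - x| = α - x := abs_of_nonneg (by linarith)
      simp only [hg_def, Set.indicator_of_mem (Set.mem_Iic.mpr hx)]
      rw [h1, h2]; ring_nf; linarith
    · have h1 : |α - x| - |β - x| ≤ |(α - x) - (β - x)| := abs_sub_abs_le_abs_sub _ _
      have h2 : |(α - x) - (β - x)| = β - α := by
        rw [show (α - x) - (β - x) = α - β by ring, abs_of_nonpos (by linarith)]; ring
      simp only [hg_def, Set.indicator_of_notMem (fun hc => hx (Set.mem_Iic.mp hc))]
      linarith
  have hint : ∫ x, g x ∂μ = (β - α) * (2 * (μ (Set.Iic α)).toReal - 1) := by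
    rw [hg_def]
    rw [integral_sub ((integrable_const (2 * (β - α))).indicator measurableSet_Iic)
      (integrable_const (β - α))]
    rw [integral_indicator_const _ measurableSet_Iic, integral_const]
    simp [measure_univ, measureReal_def]; ring
  calc (β - α) * (2 * (μ (Set.Iic α)).toReal - 1) = ∫ x, g x ∂μ := hint.symm
    _ ≤ ∫ x, (|β - x| - |α - x|) ∂μ := integral_mono hg hh hpt

lemma aux_upper {α β : ℝ} (h : α ≤ β) :
    ∫ x, (|β - x| - |α - x|) ∂μ ≤ (β - α) * (2 * (μ (Set.Iio β)).toReal - 1) := by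
  set g : ℝ → ℝ := fun x => (β - α) - (Set.Ici β).indicator (fun _ => 2 * (β - α)) x with hg_def
  have hh : Integrable (fun x => |β - x| - |α - x|) μ := by
    have h0 := (aux_integrable μ β).sub (aux_integrable μ α)
    refine h0.congr (Filter.Eventually.of_forall fun x => ?_)
    simp only [Pi.sub_apply]; ring
  have hg : Integrable g μ :=
    (integrable_const (β - α)).sub ((integrable_const (2 * (β - α))).indicator measurableSet_Ici)
  have hpt : ∀ x, |β - x| - |α - x| ≤ g x := by
    intro x
    by_cases hx : β ≤ x
    · have h1 : |β - x| = x - β := by rw [abs_of_nonpos (by linarith)]; ring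
      have h2 : |α - x| = x - α := by rw [abs_of_nonpos (by linarith)]; ring
      simp only [hg_def, Set.indicator_of_mem (Set.mem_Ici.mpr hx)]
      rw [h1, h2]; ring_nf; linarith
    · have h1 : |β - x| - |α - x| ≤ |(β - x) - (α - x)| := abs_sub_abs_le_abs_sub _ _
      have h2 : |(β - x) - (α - x)| = β - α := by
        rw [show (β - x) - (α - x) = β - α by ring, abs_of_nonneg (by linarith)]
      simp only [hg_def, Set.indicator_of_notMem (fun hc => hx (Set.mem_Ici.mp hc))]
      linarith
  have hsum : (μ (Set.Iio β)).toReal + (μ (Set.Ici β)).toReal = 1 := by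
    rw [← ENNReal.toReal_add (measure_ne_top _ _) (measure_ne_top _ _)]
    have hcompl := measure_add_measure_compl (μ := μ) (measurableSet_Iio (a := β))
    rw [Set.compl_Iio] at hcompl
    rw [hcompl, measure_univ, ENNReal.toReal_one]
  have hint : ∫ x, g x ∂μ = (β - α) * (2 * (μ (Set.Iio β)).toReal - 1) := by
    rw [hg_def]
    rw [integral_sub (integrable_const (β - α))
      ((integrable_const (2 * (β - α))).indicator measurableSet_Ici)]
    rw [integral_indicator_const _ measurableSet_Ici, integral_const]
    simp [measure_univ, measureReal_def]
    nlinarith [hsum]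
  calc ∫ x, (|β - x| - |α - x|) ∂μ ≤ ∫ x, g x ∂μ := integral_mono hh hg hpt
    _ = (β - α) * (2 * (μ (Set.Iio β)).toReal - 1) := hint

lemma aux_Iio_le {α p : ℝ} (hp : 0 ≤ p) (h : ∀ s < α, (μ (Set.Iic s)).toReal ≤ p) :
    (μ (Set.Iio α)).toReal ≤ p := by
  have hmono : Monotone (fun n : ℕ => Set.Iic (α - 1 / (n + 1))) := by
    intro m n hmn
    apply Set.Iic_subset_Iic.mpr
    have h1 : (1 : ℝ) / (n + 1) ≤ 1 / (m + 1) := by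
      apply one_div_le_one_div_of_le (by positivity)
      exact_mod_cast Nat.add_le_add_right hmn 1
    linarith
  have hunion : (⋃ n : ℕ, Set.Iic (α - 1 / (n + 1))) = Set.Iio α := by
    ext x
    simp only [Set.mem_iUnion, Set.mem_Iic, Set.mem_Iio]
    constructor
    · rintro ⟨n, hn⟩
      have : (0:ℝ) < 1 / (n + 1) := by positivity
      linarith
    · intro hx
      obtain ⟨n, hn⟩ := exists_nat_one_div_lt (show (0:ℝ) < α - x by linarith)
      exact ⟨n, by linarith⟩
  have htend := tendsto_measure_iUnion_atTop (μ := μ) hmono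
  rw [hunion] at htend
  have hle : (μ (Set.Iio α)) ≤ ENNReal.ofReal p := by
    refine le_of_tendsto' htend (fun n => ?_)
    have hs : α - 1 / (n + 1 : ℝ) < α := by
      have : (0:ℝ) < 1 / (n + 1) := by positivity
      linarith
    have := h _ hs
    show μ (Set.Iic (α - 1 / (n + 1 : ℝ))) ≤ ENNReal.ofReal p
    rw [← ENNReal.ofReal_toReal (measure_ne_top μ (Set.Iic (α - 1 / (n + 1 : ℝ))))]
    exact ENNReal.ofReal_le_ofReal this
  exact ENNReal.toReal_le_of_le_ofReal hp hle

omit [IsProbabilityMeasure μ] in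
lemma aux_right_cont {α p : ℝ} (h : ∀ β > α, p ≤ ProbabilityTheory.cdf μ β) :
    p ≤ ProbabilityTheory.cdf μ α := by
  have hcont : Filter.Tendsto (fun x => ProbabilityTheory.cdf μ x) (nhdsWithin α (Set.Ioi α))
      (nhds (ProbabilityTheory.cdf μ α)) := by
    have := (ProbabilityTheory.cdf μ).right_continuous α
    exact this.tendsto.mono_left (nhdsWithin_mono α Set.Ioi_subset_Ici_self)
  exact ge_of_tendsto hcont (eventually_nhdsWithin_of_forall (fun x hx => h x hx))

lemma aux_char (ℓ p : ℝ) (hℓ : ℓ ∈ Set.Ioo (-1 : ℝ) 1) (hp : p = (1 + ℓ) / 2)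
    (φ : ℝ → ℝ) (hφ : ∀ α, φ α = (∫ x, (|α - x| - |x|) ∂μ) - ℓ * α) (α : ℝ) :
    IsMinOn φ Set.univ α ↔
      (p ≤ ProbabilityTheory.cdf μ α ∧ ∀ s < α, ProbabilityTheory.cdf μ s ≤ p) := by
  have hp0 : 0 < p := by rw [hp]; linarith [hℓ.1]
  have hp2 : 2 * p = 1 + ℓ := by rw [hp]; ring
  have hdiff : ∀ γ δ : ℝ, φ δ - φ γ = (∫ x, (|δ - x| - |γ - x|) ∂μ) - ℓ * (δ - γ) := by
    intro γ δ
    rw [hφ δ, hφ γ]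
    have hsub : ∫ x, (|δ - x| - |γ - x|) ∂μ
        = (∫ x, (|δ - x| - |x|) ∂μ) - ∫ x, (|γ - x| - |x|) ∂μ := by
      rw [← integral_sub (aux_integrable μ δ) (aux_integrable μ γ)]
      congr 1; funext x; ring
    rw [hsub]; ring
  have hGle : ∀ β : ℝ, (μ (Set.Iio β)).toReal ≤ ProbabilityTheory.cdf μ β := by
    intro β
    rw [ProbabilityTheory.cdf_eq_real, measureReal_def]
    exact ENNReal.toReal_mono (measure_ne_top _ _) (measure_mono Set.Iio_subset_Iic_self)
  rw [isMinOn_univ_iff]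
  constructor
  · intro hmin
    constructor
    · apply aux_right_cont
      intro β hβ
      have h1 : 0 ≤ φ β - φ α := by linarith [hmin β]
      have h2 := aux_upper μ (α := α) (β := β) hβ.le
      rw [hdiff α β] at h1
      have hβα : 0 < β - α := by linarith
      have h4 : p ≤ (μ (Set.Iio β)).toReal := by nlinarith
      exact h4.trans (hGle β)
    · intro s hs
      have h1 : φ α - φ s ≤ 0 := by linarith [hmin s]
      rw [hdiff s α] at h1
      have h2 := aux_lower μ (α := s) (β := α) hs.le
      rw [ProbabilityTheory.cdf_eq_real, measureReal_def]
      have hsα : 0 < α - s := by linarith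
      nlinarith
  · rintro ⟨h1, h2⟩ β
    rcases le_or_gt α β with hab | hba
    · have hl := aux_lower μ (α := α) (β := β) hab
      have hFα : p ≤ (μ (Set.Iic α)).toReal := by
        rw [← measureReal_def, ← ProbabilityTheory.cdf_eq_real]; exact h1
      have hd := hdiff α β
      nlinarith
    · have hu := aux_upper μ (α := β) (β := α) hba.le
      have hGα : (μ (Set.Iio α)).toReal ≤ p := by
        apply aux_Iio_le μ hp0.le
        intro s hs
        rw [← measureReal_def, ← ProbabilityTheory.cdf_eq_real]
        exact h2 s hs
      have hd := hdiff β α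
      nlinarith

omit [IsProbabilityMeasure μ] in
lemma aux_exists (p : ℝ) (hp0 : 0 < p) (hp1 : p < 1) :
    ∃ a : ℝ, p ≤ ProbabilityTheory.cdf μ a ∧ ∀ s < a, ProbabilityTheory.cdf μ s ≤ p := by
  set S := {t : ℝ | p ≤ ProbabilityTheory.cdf μ t} with hS
  have hne : S.Nonempty := by
    have h := Filter.Tendsto.eventually_const_le hp1 (ProbabilityTheory.tendsto_cdf_atTop μ)
    obtain ⟨t, ht⟩ := h.exists
    exact ⟨t, ht⟩
  have hbdd : BddBelow S := by
    have h := Filter.Tendsto.eventually_lt_const hp0 (ProbabilityTheory.tendsto_cdf_atBot μ)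
    obtain ⟨t0, ht0⟩ := h.exists
    refine ⟨t0, fun t ht => ?_⟩
    by_contra hc
    push_neg at hc
    exact absurd (le_trans ht (ProbabilityTheory.monotone_cdf μ hc.le)) (not_le.mpr ht0)
  refine ⟨sInf S, ?_, ?_⟩
  · apply aux_right_cont
    intro β hβ
    obtain ⟨t, htS, htβ⟩ := (csInf_lt_iff hbdd hne).mp hβ
    exact le_trans htS (ProbabilityTheory.monotone_cdf μ htβ.le)
  · intro s hs
    have hns := notMem_of_lt_csInf hs hbdd
    simp only [hS, Set.mem_setOf_eq] at hns
    linarith [lt_of_not_ge hns]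

end Aux

/-- `μ` has a unique geometric `ℓ`-quantile iff the preimage of `p = (1+ℓ)/2` under the CDF
is empty or a singleton. -/
theorem stmt5 (μ : Measure ℝ) [IsProbabilityMeasure μ]
    (ℓ : ℝ) (hℓ : ℓ ∈ Set.Ioo (-1 : ℝ) 1)
    (p : ℝ) (hp : p = (1 + ℓ) / 2)
    (φ : ℝ → ℝ) (hφ : ∀ α, φ α = (∫ x, (|α - x| - |x|) ∂μ) - ℓ * α) :
    (∃! α : ℝ, IsMinOn φ Set.univ α) ↔
      Set.Subsingleton ((fun x => ProbabilityTheory.cdf μ x) ⁻¹' {p}) := by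
  have hp0 : 0 < p := by rw [hp]; linarith [hℓ.1]
  have hp1 : p < 1 := by rw [hp]; linarith [hℓ.2]
  have hchar := aux_char μ ℓ p hℓ hp φ hφ
  constructor
  · rintro ⟨a, ha, hu⟩ x hx y hy
    simp only [Set.mem_preimage, Set.mem_singleton_iff] at hx hy
    have hxm : IsMinOn φ Set.univ x := (hchar x).2 ⟨hx.ge, fun s hs => hx ▸ ProbabilityTheory.monotone_cdf μ hs.le⟩
    have hym : IsMinOn φ Set.univ y := (hchar y).2 ⟨hy.ge, fun s hs => hy ▸ ProbabilityTheory.monotone_cdf μ hs.le⟩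
    rw [hu x hxm, hu y hym]
  · intro hss
    obtain ⟨a, ha⟩ := aux_exists μ p hp0 hp1
    refine ⟨a, (hchar a).2 ha, fun b hb => ?_⟩
    have hbQ := (hchar b).1 hb
    -- helper: no two distinct points both satisfy Q
    have key : ∀ c d : ℝ, c < d →
        (p ≤ ProbabilityTheory.cdf μ c ∧ ∀ s < c, ProbabilityTheory.cdf μ s ≤ p) →
        (p ≤ ProbabilityTheory.cdf μ d ∧ ∀ s < d, ProbabilityTheory.cdf μ s ≤ p) → False := by
      intro c d hcd hc hd
      have hm1 : c < (c + d) / 2 := by linarith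
      have hm2 : (c + d) / 2 < d := by linarith
      have hc' : ProbabilityTheory.cdf μ c = p := le_antisymm (hd.2 c hcd) hc.1
      have hm' : ProbabilityTheory.cdf μ ((c + d) / 2) = p :=
        le_antisymm (hd.2 _ hm2) (hc' ▸ ProbabilityTheory.monotone_cdf μ hm1.le)
      have := hss (show c ∈ _ from hc') (show (c + d) / 2 ∈ _ from hm')
      linarith
    rcases lt_trichotomy b a with h | h | h
    · exact absurd (key b a h hbQ ha) not_false
    · exact h
    · exact absurd (key a b h ha hbQ) not_false
end

section
/- If E is a reflexive Banach space, then for every Borel probability measure μ on E and every ℓ ∈ E* with ‖ℓ‖ < 1, the function φ_ℓ(α) = ∫(‖α - x‖ - ‖x‖) dμ(x) - ℓ(α) attains its infimum, i.e., μ has at least one geometric ℓ-quantile. -/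
open MeasureTheory NormedSpace

section aux
variable {E : Type*} [NormedAddCommGroup E] [NormedSpace ℝ E]

lemma weakClosed_of_convex_closed {s : Set E} (hc : Convex ℝ s) (hcl : IsClosed s) :
    IsClosed (toWeakSpace ℝ E '' s) := by
  have h := hc.toWeakSpace_closure (𝕜 := ℝ)
  rw [hcl.closure_eq] at h
  rw [h]
  exact isClosed_closure

lemma weakCompact_image_closedBall
    (hrefl : Function.Surjective (inclusionInDoubleDual ℝ E)) (R : ℝ) :
    IsCompact (toWeakSpace ℝ E '' Metric.closedBall (0 : E) R) := by
  set e : E ≃ₗᵢ[ℝ] StrongDual ℝ (StrongDual ℝ E) :=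
    LinearIsometryEquiv.ofSurjective (inclusionInDoubleDualLi ℝ (E := E)) hrefl with he_def
  set g : WeakDual ℝ (StrongDual ℝ E) → WeakSpace ℝ E :=
    fun F => toWeakSpace ℝ E (e.symm (WeakDual.toStrongDual F)) with hg_def
  have hg : Continuous g := by
    apply WeakBilin.continuous_of_continuous_eval
    intro ℓ'
    have h1 : (fun F : WeakDual ℝ (StrongDual ℝ E) => (topDualPairing ℝ E).flip (g F) ℓ') =
        fun F : WeakDual ℝ (StrongDual ℝ E) => (WeakDual.toStrongDual F) ℓ' := by
      funext F
      show ℓ' (e.symm (WeakDual.toStrongDual F)) = (WeakDual.toStrongDual F) ℓ'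
      conv_rhs => rw [← e.apply_symm_apply (WeakDual.toStrongDual F)]
      rfl
    rw [h1]
    exact WeakDual.eval_continuous ℓ'
  have hset : toWeakSpace ℝ E '' Metric.closedBall (0 : E) R
      = g '' (WeakDual.toStrongDual ⁻¹' Metric.closedBall (0 : StrongDual ℝ (StrongDual ℝ E)) R) := by
    ext y
    constructor
    · rintro ⟨x, hx, rfl⟩
      refine ⟨WeakDual.toStrongDual.symm (e x), ?_, ?_⟩
      · simp only [Set.mem_preimage, mem_closedBall_zero_iff] at hx ⊢
        exact (mem_closedBall_zero_iff (a := e x)).mpr (by rw [LinearIsometryEquiv.norm_map]; exact hx)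
      · exact e.symm_apply_apply x
    · rintro ⟨F, hF, rfl⟩
      refine ⟨e.symm (WeakDual.toStrongDual F), ?_, rfl⟩
      simp only [Set.mem_preimage, mem_closedBall_zero_iff] at hF ⊢
      rw [LinearIsometryEquiv.norm_map]; exact (mem_closedBall_zero_iff (a := WeakDual.toStrongDual F)).mp hF
  rw [hset]
  exact (WeakDual.isCompact_closedBall (0 : StrongDual ℝ (StrongDual ℝ E)) R).image hg

end aux

section phi
variable {E : Type*} [NormedAddCommGroup E] [NormedSpace ℝ E]
  [MeasurableSpace E] [BorelSpace E]
  (μ : Measure E) [IsProbabilityMeasure μ] (ℓ : StrongDual ℝ E)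

lemma phi_ptbound (a x : E) : |‖a - x‖ - ‖x‖| ≤ ‖a‖ := by
  calc |‖a - x‖ - ‖x‖| = |‖a - x‖ - ‖-x‖| := by rw [norm_neg]
    _ ≤ ‖(a - x) - (-x)‖ := abs_norm_sub_norm_le _ _
    _ = ‖a‖ := by congr 1; abel

lemma phi_integrable (a : E) : Integrable (fun x => ‖a - x‖ - ‖x‖) μ := by
  refine (integrable_const ‖a‖).mono' ?_ ?_
  · exact (((continuous_const.sub continuous_id).norm).sub continuous_norm).aestronglyMeasurable
  · exact Filter.Eventually.of_forall fun x => by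
      rw [Real.norm_eq_abs]; exact phi_ptbound a x

lemma phi_continuous : Continuous (fun a : E => (∫ x, (‖a - x‖ - ‖x‖) ∂μ) - ℓ a) := by
  have hI : LipschitzWith 1 (fun a : E => ∫ x, (‖a - x‖ - ‖x‖) ∂μ) := by
    refine LipschitzWith.of_dist_le_mul fun a b => ?_
    rw [Real.dist_eq, dist_eq_norm, NNReal.coe_one, one_mul,
      ← integral_sub (phi_integrable μ a) (phi_integrable μ b)]
    calc |∫ x, ((‖a - x‖ - ‖x‖) - (‖b - x‖ - ‖x‖)) ∂μ|
        ≤ ∫ x, |(‖a - x‖ - ‖x‖) - (‖b - x‖ - ‖x‖)| ∂μ := by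
          simpa [Real.norm_eq_abs] using
            norm_integral_le_integral_norm (fun x => (‖a - x‖ - ‖x‖) - (‖b - x‖ - ‖x‖))
      _ ≤ ∫ _x, ‖a - b‖ ∂μ := by
          refine integral_mono ((phi_integrable μ a).sub (phi_integrable μ b)).abs
            (integrable_const _) (fun x => ?_)
          have h1 : (‖a - x‖ - ‖x‖) - (‖b - x‖ - ‖x‖) = ‖a - x‖ - ‖b - x‖ := by ring
          rw [h1]
          calc |‖a - x‖ - ‖b - x‖| ≤ ‖(a - x) - (b - x)‖ := abs_norm_sub_norm_le _ _
            _ = ‖a - b‖ := by rw [sub_sub_sub_cancel_right]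
      _ = ‖a - b‖ := by simp
  exact hI.continuous.sub ℓ.continuous

lemma phi_convex : ConvexOn ℝ Set.univ (fun a : E => (∫ x, (‖a - x‖ - ‖x‖) ∂μ) - ℓ a) := by
  refine ⟨convex_univ, fun a _ b _ t s ht hs hts => ?_⟩
  have hpt : ∀ x : E, ‖(t • a + s • b) - x‖ - ‖x‖
      ≤ t * (‖a - x‖ - ‖x‖) + s * (‖b - x‖ - ‖x‖) := by
    intro x
    have hxx : t • x + s • x = x := by rw [← add_smul, hts, one_smul]
    have hx : (t • a + s • b) - x = t • (a - x) + s • (b - x) := by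
      have : t • (a - x) + s • (b - x) = (t • a + s • b) - (t • x + s • x) := by
        rw [smul_sub, smul_sub]; abel
      rw [this, hxx]
    have hn := norm_add_le (t • (a - x)) (s • (b - x))
    rw [norm_smul, norm_smul, Real.norm_eq_abs, Real.norm_eq_abs,
      abs_of_nonneg ht, abs_of_nonneg hs] at hn
    have hxn : t * ‖x‖ + s * ‖x‖ = ‖x‖ := by rw [← add_mul, hts, one_mul]
    rw [hx]
    nlinarith [hn, hxn]
  have hint : (∫ x, ‖(t • a + s • b) - x‖ - ‖x‖ ∂μ)
      ≤ t * (∫ x, ‖a - x‖ - ‖x‖ ∂μ) + s * (∫ x, ‖b - x‖ - ‖x‖ ∂μ) := by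
    calc (∫ x, ‖(t • a + s • b) - x‖ - ‖x‖ ∂μ)
        ≤ ∫ x, (t * (‖a - x‖ - ‖x‖) + s * (‖b - x‖ - ‖x‖)) ∂μ :=
          integral_mono (phi_integrable μ _)
            (((phi_integrable μ a).const_mul t).add ((phi_integrable μ b).const_mul s)) hpt
      _ = t * (∫ x, ‖a - x‖ - ‖x‖ ∂μ) + s * (∫ x, ‖b - x‖ - ‖x‖ ∂μ) := by
          rw [integral_add ((phi_integrable μ a).const_mul t)
            ((phi_integrable μ b).const_mul s), integral_const_mul, integral_const_mul]
  have hl : ℓ (t • a + s • b) = t * ℓ a + s * ℓ b := by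
    rw [map_add, ℓ.map_smul, ℓ.map_smul, smul_eq_mul, smul_eq_mul]
  simp only [smul_eq_mul]
  rw [hl] at *
  linarith [hint]

lemma phi_coercive (hℓ : ‖ℓ‖ < 1) :
    ∃ R : ℝ, 0 < R ∧ ∀ a : E, R < ‖a‖ → 0 < (∫ x, (‖a - x‖ - ‖x‖) ∂μ) - ℓ a := by
  have hℓ0 : (0 : ℝ) ≤ ‖ℓ‖ := norm_nonneg _
  have h1ℓ : 0 < 1 - ‖ℓ‖ := by linarith
  set ε : ℝ := (1 - ‖ℓ‖) / 4 with hε_def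
  have hε : 0 < ε := by positivity
  have hmeasn : ∀ n : ℕ, MeasurableSet {x : E | (n : ℝ) < ‖x‖} := fun n =>
    (isOpen_lt continuous_const continuous_norm).measurableSet
  obtain ⟨n, hn⟩ : ∃ n : ℕ, μ {x : E | (n : ℝ) < ‖x‖} < ENNReal.ofReal ε := by
    have htend : Filter.Tendsto (fun n : ℕ => μ {x : E | (n : ℝ) < ‖x‖})
        Filter.atTop (nhds (μ (⋂ n : ℕ, {x : E | (n : ℝ) < ‖x‖}))) := by
      refine tendsto_measure_iInter_atTop (fun n => (hmeasn n).nullMeasurableSet)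
        (fun i j hij x hx => lt_of_le_of_lt (show (i:ℝ) ≤ (j:ℝ) by exact_mod_cast hij) hx) ⟨0, measure_ne_top μ _⟩
    have hempty : (⋂ n : ℕ, {x : E | (n : ℝ) < ‖x‖}) = ∅ := by
      ext x
      simp only [Set.mem_iInter, Set.mem_setOf_eq, Set.mem_empty_iff_false, iff_false, not_forall,
        not_lt]
      exact exists_nat_ge ‖x‖
    rw [hempty, measure_empty] at htend
    exact (htend.eventually (gt_mem_nhds (ENNReal.ofReal_pos.mpr hε))).exists
  set r : ℝ := (n : ℝ) with hr_def
  have hr0 : (0 : ℝ) ≤ r := Nat.cast_nonneg n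
  set D : ℝ := (4 * r + 1) / (1 - ‖ℓ‖) with hD_def
  have hD0 : 0 < D := by positivity
  refine ⟨r + D, by positivity, fun a ha => ?_⟩
  have hra : r ≤ ‖a‖ := by linarith
  set c : ℝ := 2 * ‖a‖ - 2 * r with hc_def
  have hc0 : (0 : ℝ) ≤ c := by simp only [hc_def]; linarith
  have hpt : ∀ x : E,
      (‖a‖ - 2 * r) - Set.indicator {x : E | (n : ℝ) < ‖x‖} (fun _ => c) x
        ≤ ‖a - x‖ - ‖x‖ := by
    intro x
    by_cases hx : (n : ℝ) < ‖x‖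
    · rw [Set.indicator_of_mem (show x ∈ {x : E | (n : ℝ) < ‖x‖} from hx) (fun _ => c)]
      have h2 := (abs_le.mp (phi_ptbound a x)).1
      simp only [hc_def]
      linarith
    · rw [Set.indicator_of_notMem (show x ∉ {x : E | (n : ℝ) < ‖x‖} from hx) (fun _ => c)]
      push_neg at hx
      have h3 := norm_sub_norm_le a x
      rw [← hr_def] at hx
      linarith
  have hind : Integrable (Set.indicator {x : E | (n : ℝ) < ‖x‖} (fun _ => c)) μ :=
    (integrable_const c).indicator (hmeasn n)
  have hIa : (‖a‖ - 2 * r) - c * (μ {x : E | (n : ℝ) < ‖x‖}).toReal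
      ≤ ∫ x, ‖a - x‖ - ‖x‖ ∂μ := by
    have h4 : (∫ x, ((‖a‖ - 2 * r) - Set.indicator {x : E | (n : ℝ) < ‖x‖} (fun _ => c) x) ∂μ)
        = (‖a‖ - 2 * r) - c * (μ {x : E | (n : ℝ) < ‖x‖}).toReal := by
      rw [integral_sub (integrable_const _) hind, integral_const,
        integral_indicator_const _ (hmeasn n)]
      simp [measure_univ, smul_eq_mul, mul_comm, measureReal_def]
    rw [← h4]
    exact integral_mono ((integrable_const _).sub hind) (phi_integrable μ a) hpt
  have hμ : (μ {x : E | (n : ℝ) < ‖x‖}).toReal ≤ ε :=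
    ENNReal.toReal_le_of_le_ofReal hε.le hn.le
  have hμ0 : (0 : ℝ) ≤ (μ {x : E | (n : ℝ) < ‖x‖}).toReal := ENNReal.toReal_nonneg
  have hℓa : ℓ a ≤ ‖ℓ‖ * ‖a‖ :=
    (le_abs_self _).trans (by rw [← Real.norm_eq_abs]; exact ℓ.le_opNorm a)
  have hcε : c * (μ {x : E | (n : ℝ) < ‖x‖}).toReal ≤ c * ε :=
    mul_le_mul_of_nonneg_left hμ hc0
  have hD : (1 - ‖ℓ‖) * D = 4 * r + 1 := by
    rw [hD_def]; field_simp
  have hmul : (1 - ‖ℓ‖) * (r + D) < (1 - ‖ℓ‖) * ‖a‖ :=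
    mul_lt_mul_of_pos_left ha h1ℓ
  nlinarith [hIa, hℓa, hcε, hD, hmul, hr0, hε, h1ℓ]

end phi

/-- If `E` is a reflexive Banach space, then for every Borel probability measure `μ` and every
`ℓ ∈ E*` with `‖ℓ‖ < 1`, the objective function `φ_ℓ` attains its infimum. -/
theorem stmt6 {E : Type*} [NormedAddCommGroup E] [NormedSpace ℝ E] [CompleteSpace E]
    [MeasurableSpace E] [BorelSpace E]
    (hrefl : Function.Surjective (NormedSpace.inclusionInDoubleDual ℝ E))
    (μ : Measure E) [IsProbabilityMeasure μ]
    (ℓ : StrongDual ℝ E) (hℓ : ‖ℓ‖ < 1) :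
    ∃ α : E, IsMinOn (fun a : E => (∫ x, (‖a - x‖ - ‖x‖) ∂μ) - ℓ a) Set.univ α := by
  set φ : E → ℝ := fun a => (∫ x, (‖a - x‖ - ‖x‖) ∂μ) - ℓ a with hφ_def
  obtain ⟨R, hR0, hcoer⟩ := phi_coercive μ ℓ hℓ
  set K : Set E := Metric.closedBall (0 : E) R with hK_def
  have h0K : (0 : E) ∈ K := Metric.mem_closedBall_self hR0.le
  have hφ0 : φ 0 = 0 := by
    have h : (∫ x, (‖(0 : E) - x‖ - ‖x‖) ∂μ) = 0 := by
      have h2 : (fun x : E => ‖(0 : E) - x‖ - ‖x‖) = fun _ => (0 : ℝ) := by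
        funext x; simp
      rw [h2, integral_zero]
    simp [hφ_def, h]
  -- lower bound for φ on K
  have hφlb : ∀ a ∈ K, -((1 + ‖ℓ‖) * R) ≤ φ a := by
    intro a ha
    have haR : ‖a‖ ≤ R := by
      have h := ha
      rwa [hK_def, Metric.mem_closedBall, dist_zero_right] at h
    have h1 : |∫ x, (‖a - x‖ - ‖x‖) ∂μ| ≤ ‖a‖ := by
      calc |∫ x, (‖a - x‖ - ‖x‖) ∂μ| ≤ ∫ x, |‖a - x‖ - ‖x‖| ∂μ := by
            simpa [Real.norm_eq_abs] using
              norm_integral_le_integral_norm (fun x => ‖a - x‖ - ‖x‖)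
        _ ≤ ∫ _x, ‖a‖ ∂μ := integral_mono (phi_integrable μ a).abs (integrable_const _)
            (fun x => phi_ptbound a x)
        _ = ‖a‖ := by simp
    have h2 : ℓ a ≤ ‖ℓ‖ * ‖a‖ :=
      (le_abs_self _).trans (by rw [← Real.norm_eq_abs]; exact ℓ.le_opNorm a)
    have h3 := (abs_le.mp h1).1
    have hℓ0 : (0 : ℝ) ≤ ‖ℓ‖ := norm_nonneg _
    simp only [hφ_def]
    nlinarith [haR, norm_nonneg a]
  have hKne : (φ '' K).Nonempty := ⟨φ 0, 0, h0K, rfl⟩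
  have hbdd : BddBelow (φ '' K) := ⟨-((1 + ‖ℓ‖) * R), by
    rintro y ⟨a, ha, rfl⟩; exact hφlb a ha⟩
  set m : ℝ := sInf (φ '' K) with hm_def
  have hm0 : m ≤ 0 := by
    rw [← hφ0]; exact csInf_le hbdd ⟨0, h0K, rfl⟩
  -- the nested sets
  set D : ℕ → Set E := fun n => K ∩ {a | φ a ≤ m + 1 / (n + 1)} with hD_def
  set C : ℕ → Set (WeakSpace ℝ E) := fun n => toWeakSpace ℝ E '' D n with hC_def
  have hDne : ∀ n, (D n).Nonempty := by
    intro n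
    have hlt : m < m + 1 / (n + 1 : ℝ) := by
      have : (0:ℝ) < 1 / (n + 1 : ℝ) := by positivity
      linarith
    obtain ⟨y, ⟨a, haK, rfl⟩, hy⟩ := exists_lt_of_csInf_lt hKne hlt
    exact ⟨a, haK, hy.le⟩
  have hDconv : ∀ n, Convex ℝ (D n) := by
    intro n
    refine (convex_closedBall (0 : E) R).inter ?_
    have h := (phi_convex μ ℓ).convex_le (m + 1 / (n + 1 : ℝ))
    simpa [hφ_def, Set.sep_univ] using h
  have hDcl : ∀ n, IsClosed (D n) := fun n =>
    Metric.isClosed_closedBall.inter (isClosed_le (phi_continuous μ ℓ) continuous_const)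
  have hCcl : ∀ n, IsClosed (C n) := fun n =>
    weakClosed_of_convex_closed (hDconv n) (hDcl n)
  have hCsub : ∀ n, C (n + 1) ⊆ C n := by
    intro n
    apply Set.image_mono
    rintro a ⟨haK, haφ⟩
    refine ⟨haK, ?_⟩
    simp only [Set.mem_setOf_eq] at haφ ⊢
    have h5 : (1 : ℝ) / ((n : ℝ) + 1 + 1) ≤ 1 / ((n : ℝ) + 1) := by
      apply one_div_le_one_div_of_le <;> linarith [Nat.cast_nonneg (α := ℝ) n]
    push_cast at haφ ⊢
    linarith
  have hCcompact : IsCompact (C 0) := by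
    refine (weakCompact_image_closedBall hrefl R).of_isClosed_subset (hCcl 0) ?_
    exact Set.image_mono (Set.inter_subset_left)
  have hCne : ∀ n, (C n).Nonempty := fun n => (hDne n).image _
  obtain ⟨b, hb⟩ := IsCompact.nonempty_iInter_of_sequence_nonempty_isCompact_isClosed
    C hCsub hCne hCcompact hCcl
  set α : E := (toWeakSpace ℝ E).symm b with hα_def
  have hαD : ∀ n, α ∈ D n := by
    intro n
    have hbn : b ∈ C n := Set.mem_iInter.mp hb n
    obtain ⟨a', ha', hab⟩ := hbn
    have : a' = α := by rw [hα_def, ← hab, LinearEquiv.symm_apply_apply]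
    rwa [← this]
  have hαm : φ α ≤ m := by
    by_contra hcon
    push_neg at hcon
    obtain ⟨n, hn⟩ := exists_nat_one_div_lt (show (0:ℝ) < φ α - m by linarith)
    have := (hαD n).2
    simp only [Set.mem_setOf_eq] at this
    push_cast at this hn
    linarith
  refine ⟨α, ?_⟩
  rw [isMinOn_iff]
  intro y _
  show φ α ≤ φ y
  by_cases hy : y ∈ K
  · exact hαm.trans (csInf_le hbdd ⟨y, hy, rfl⟩)
  · have hyR : R < ‖y‖ := by
      simp only [hK_def, Metric.mem_closedBall, dist_zero_right, not_le] at hy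
      exact hy
    have := hcoer y hyR
    have : 0 < φ y := this
    linarith [hαm, hm0]
end

section
/- If E is a strictly convex normed space and μ is a Borel probability measure on E that is not concentrated on any affine line (μ(L) < 1 for every affine line L), then the objective function φ_ℓ is strictly convex; in particular μ has at most one geometric ℓ-quantile. -/
open MeasureTheory

/-- If `E` is strictly convex and `μ` is not concentrated on any affine line, then `φ_ℓ` is
strictly convex; in particular `μ` has at most one geometric `ℓ`-quantile. -/
theorem stmt7 {E : Type*} [NormedAddCommGroup E] [NormedSpace ℝ E] [StrictConvexSpace ℝ E]
    [MeasurableSpace E] [BorelSpace E]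
    (μ : Measure E) [IsProbabilityMeasure μ]
    (hμ : ∀ u v : E, v ≠ 0 → μ (Set.range fun t : ℝ => u + t • v) < 1)
    (ℓ : E →L[ℝ] ℝ) (hℓ : ‖ℓ‖ < 1) :
    StrictConvexOn ℝ Set.univ (fun α : E => (∫ x, (‖α - x‖ - ‖x‖) ∂μ) - ℓ α) ∧
    Set.Subsingleton
      {α : E | IsMinOn (fun a : E => (∫ x, (‖a - x‖ - ‖x‖) ∂μ) - ℓ a) Set.univ α} := by
  have hint : ∀ α : E, Integrable (fun x => ‖α - x‖ - ‖x‖) μ := by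
    intro α
    refine ⟨((continuous_const.sub continuous_id).norm.sub continuous_norm).aestronglyMeasurable, ?_⟩
    apply HasFiniteIntegral.of_bounded (C := ‖α‖)
    filter_upwards with x
    calc ‖‖α - x‖ - ‖x‖‖ = |‖α - x‖ - ‖-x‖| := by rw [norm_neg]; rfl
      _ ≤ ‖(α - x) - (-x)‖ := abs_norm_sub_norm_le _ _
      _ = ‖α‖ := by rw [sub_neg_eq_add, sub_add_cancel]
  have key : StrictConvexOn ℝ Set.univ (fun α : E => (∫ x, (‖α - x‖ - ‖x‖) ∂μ) - ℓ α) := by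
    constructor
    · exact convex_univ
    · rintro a - b - hab t s ht hs hts
      have hba : b - a ≠ 0 := sub_ne_zero.mpr (Ne.symm hab)
      set c := t • a + s • b with hc
      set f : E → ℝ := fun x => ‖c - x‖ - ‖x‖ with hf
      set g : E → ℝ := fun x => t * (‖a - x‖ - ‖x‖) + s * (‖b - x‖ - ‖x‖) with hg
      have hdecomp : ∀ x : E, c - x = t • (a - x) + s • (b - x) := by
        intro x
        have : t • (a - x) + s • (b - x) = t • a + s • b - (t + s) • x := by module
        rw [this, hts, one_smul]
      have h_le : ∀ x : E, f x ≤ g x := by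
        intro x
        have h1 : ‖c - x‖ ≤ t * ‖a - x‖ + s * ‖b - x‖ := by
          rw [hdecomp x]
          calc ‖t • (a - x) + s • (b - x)‖ ≤ ‖t • (a - x)‖ + ‖s • (b - x)‖ := norm_add_le _ _
            _ = t * ‖a - x‖ + s * ‖b - x‖ := by
              rw [norm_smul, norm_smul, Real.norm_eq_abs, Real.norm_eq_abs,
                abs_of_pos ht, abs_of_pos hs]
        simp only [hf, hg]
        nlinarith [norm_nonneg x]
      have h_strict : ∀ x : E, x ∉ (Set.range fun τ : ℝ => a + τ • (b - a)) → f x < g x := by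
        intro x hx
        have hne : ¬ SameRay ℝ (t • (a - x)) (s • (b - x)) := by
          intro hsr
          rcases hsr with h0 | h0 | ⟨r₁, r₂, hr₁, hr₂, hreq⟩
          · have : a - x = 0 := by
              rcases smul_eq_zero.mp h0 with h | h
              · exact absurd h ht.ne'
              · exact h
            refine hx ⟨0, ?_⟩
            show a + (0:ℝ) • (b - a) = x
            rw [zero_smul, add_zero]
            exact sub_eq_zero.mp this
          · have : b - x = 0 := by
              rcases smul_eq_zero.mp h0 with h | h
              · exact absurd h hs.ne'
              · exact h
            refine hx ⟨1, ?_⟩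
            show a + (1:ℝ) • (b - a) = x
            rw [one_smul, ← sub_eq_zero.mp this]
            abel
          · rw [smul_smul, smul_smul] at hreq
            set p := r₁ * t with hp
            set q := r₂ * s with hq
            have hp0 : 0 < p := mul_pos hr₁ ht
            have hq0 : 0 < q := mul_pos hr₂ hs
            have hxeq : (q - p) • x = q • b - p • a := by
              linear_combination (norm := module) hreq
            by_cases hpq : q - p = 0
            · exfalso
              rw [hpq, zero_smul] at hxeq
              have hqp' : q = p := sub_eq_zero.mp hpq
              rw [hqp'] at hxeq
              have hba0 : p • (b - a) = 0 := by rw [smul_sub]; exact hxeq.symm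
              rcases smul_eq_zero.mp hba0 with h | h
              · exact hp0.ne' h
              · exact hba h
            · refine hx ⟨q / (q - p), ?_⟩
              apply smul_right_injective E hpq
              show (q - p) • (a + (q / (q - p)) • (b - a)) = (q - p) • x
              rw [hxeq]
              match_scalars <;> field_simp <;> ring
        have hlt : ‖c - x‖ < t * ‖a - x‖ + s * ‖b - x‖ := by
          rw [hdecomp x]
          calc ‖t • (a - x) + s • (b - x)‖ < ‖t • (a - x)‖ + ‖s • (b - x)‖ :=
              not_sameRay_iff_norm_add_lt.mp hne
            _ = t * ‖a - x‖ + s * ‖b - x‖ := by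
              rw [norm_smul, norm_smul, Real.norm_eq_abs, Real.norm_eq_abs,
                abs_of_pos ht, abs_of_pos hs]
        simp only [hf, hg]
        nlinarith [norm_nonneg x]
      have hgint : Integrable g μ := ((hint a).const_mul t).add ((hint b).const_mul s)
      have hdiff : Integrable (fun x => g x - f x) μ := hgint.sub (hint c)
      have hpos : 0 < ∫ x, (g x - f x) ∂μ := by
        rw [integral_pos_iff_support_of_nonneg (fun x => sub_nonneg.mpr (h_le x)) hdiff]
        by_contra hcon
        push_neg at hcon
        have hzero : μ (Function.support fun x => g x - f x) = 0 := le_antisymm hcon zero_le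
        have hsub : Set.univ ⊆ (Set.range fun τ : ℝ => a + τ • (b - a)) ∪
            (Function.support fun x => g x - f x) := by
          intro x _
          by_cases hxl : x ∈ (Set.range fun τ : ℝ => a + τ • (b - a))
          · exact Or.inl hxl
          · exact Or.inr (by simp only [Function.mem_support]; exact sub_ne_zero.mpr (h_strict x hxl).ne')
        have h1 : (1 : ENNReal) = μ Set.univ := (measure_univ).symm
        have h2 : μ Set.univ ≤ μ (Set.range fun τ : ℝ => a + τ • (b - a)) +
            μ (Function.support fun x => g x - f x) :=
          le_trans (measure_mono hsub) (measure_union_le _ _)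
        rw [hzero, add_zero] at h2
        exact absurd (h1 ▸ h2) (not_le.mpr (hμ a (b - a) hba))
      have hintlt : ∫ x, f x ∂μ < ∫ x, g x ∂μ := by
        have := integral_sub hgint (hint c)
        nlinarith [hpos, this]
      have hgval : ∫ x, g x ∂μ = t * (∫ x, (‖a - x‖ - ‖x‖) ∂μ) + s * (∫ x, (‖b - x‖ - ‖x‖) ∂μ) := by
        rw [hg]
        rw [integral_add ((hint a).const_mul t) ((hint b).const_mul s),
          integral_const_mul, integral_const_mul]
      have hl : ℓ c = t * ℓ a + s * ℓ b := by
        simp [hc, ℓ.map_add, ℓ.map_smul, smul_eq_mul]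
      show (∫ x, (‖c - x‖ - ‖x‖) ∂μ) - ℓ c <
        t • ((∫ x, (‖a - x‖ - ‖x‖) ∂μ) - ℓ a) + s • ((∫ x, (‖b - x‖ - ‖x‖) ∂μ) - ℓ b)
      simp only [smul_eq_mul]
      have h1 : (∫ x, (‖c - x‖ - ‖x‖) ∂μ) <
          t * (∫ x, (‖a - x‖ - ‖x‖) ∂μ) + s * (∫ x, (‖b - x‖ - ‖x‖) ∂μ) := by
        rw [← hgval]; exact hintlt
      nlinarith [h1, hl]
  refine ⟨key, ?_⟩
  intro x hx y hy
  exact key.eq_of_isMinOn hx hy (Set.mem_univ _) (Set.mem_univ _)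
end

section
/- If E is a normed space in which every Borel probability measure not concentrated on a line has at most one geometric median, then E is strictly convex. -/
open MeasureTheory
open scoped ENNReal

/-- If every Borel probability measure on `E` not concentrated on a line has at most one
geometric median, then `E` is strictly convex. -/
theorem stmt8 {E : Type*} [NormedAddCommGroup E] [NormedSpace ℝ E]
    [MeasurableSpace E] [BorelSpace E]
    (h : ∀ μ : Measure E, IsProbabilityMeasure μ →
      (∀ u v : E, v ≠ 0 → μ (Set.range fun t : ℝ => u + t • v) < 1) →
      Set.Subsingleton
        {α : E | IsMinOn (fun a : E => ∫ x, (‖a - x‖ - ‖x‖) ∂μ) Set.univ α}) :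
    StrictConvexSpace ℝ E := by
  by_contra hsc
  have hns : ¬ ∀ ⦃x y : E⦄, ‖x‖ = 1 → ‖y‖ = 1 → x ≠ y → ‖x + y‖ ≠ 2 :=
    fun H => hsc (StrictConvexSpace.of_norm_add_ne_two H)
  push_neg at hns
  obtain ⟨x, y, hx, hy, hxy, hadd⟩ := hns
  set w : E := (2:ℝ)⁻¹ • (x + y) with hw_def
  set z : E := (2:ℝ)⁻¹ • (x - y) with hz_def
  have hw1 : ‖w‖ = 1 := by rw [hw_def, norm_smul, hadd]; norm_num
  have hz0 : z ≠ 0 := by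
    rw [hz_def]
    intro hc
    rcases smul_eq_zero.mp hc with h1 | h1
    · norm_num at h1
    · exact hxy (sub_eq_zero.mp h1)
  have hwz_add : w + z = x := by rw [hw_def, hz_def]; module
  have hwz_sub : w - z = y := by rw [hw_def, hz_def]; module
  set μ : Measure E :=
    (4⁻¹ : ℝ≥0∞) • (Measure.dirac w + Measure.dirac (-w) + Measure.dirac z
      + Measure.dirac (-z)) with hμ_def
  have hprob : IsProbabilityMeasure μ := by
    constructor
    rw [hμ_def]
    simp only [Measure.smul_apply, Measure.add_apply, measure_univ, smul_eq_mul, mul_one]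
    rw [show ((1:ℝ≥0∞) + 1 + 1 + 1) = 4 by norm_num, ENNReal.inv_mul_cancel] <;> norm_num
  have hline : ∀ u v : E, v ≠ 0 → μ (Set.range fun t : ℝ => u + t • v) < 1 := by
    intro u v hv
    set L := Set.range fun t : ℝ => u + t • v with hL
    have key : w ∉ L ∨ (-w) ∉ L ∨ z ∉ L ∨ (-z) ∉ L := by
      by_contra hc
      push_neg at hc
      obtain ⟨⟨t1, h1⟩, ⟨t2, h2⟩, ⟨t3, h3⟩, ⟨t4, h4⟩⟩ := hc
      simp only at h1 h2 h3 h4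
      have hww : w + w = (t1 - t2) • v := by
        have : (u + t1 • v) - (u + t2 • v) = (t1 - t2) • v := by module
        rw [h1, h2] at this
        rw [← this]; abel
      have hzz : z + z = (t3 - t4) • v := by
        have : (u + t3 • v) - (u + t4 • v) = (t3 - t4) • v := by module
        rw [h3, h4] at this
        rw [← this]; abel
      set a : ℝ := (t1 - t2) / 2 with ha_def
      set b : ℝ := (t3 - t4) / 2 with hb_def
      have hwa : w = a • v := by
        have : (2:ℝ) • w = (t1 - t2) • v := by rw [two_smul]; exact hww
        rw [ha_def]
        rw [div_eq_inv_mul, mul_smul, ← this]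
        module
      have hzb : z = b • v := by
        have : (2:ℝ) • z = (t3 - t4) • v := by rw [two_smul]; exact hzz
        rw [hb_def]
        rw [div_eq_inv_mul, mul_smul, ← this]
        module
      have hxv : x = (a + b) • v := by rw [← hwz_add, hwa, hzb]; module
      have hyv : y = (a - b) • v := by rw [← hwz_sub, hwa, hzb]; module
      have hvn : ‖v‖ ≠ 0 := norm_ne_zero_iff.mpr hv
      have hax : |a + b| * ‖v‖ = 1 := by
        rw [← Real.norm_eq_abs, ← norm_smul, ← hxv, hx]
      have hay : |a - b| * ‖v‖ = 1 := by
        rw [← Real.norm_eq_abs, ← norm_smul, ← hyv, hy]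
      have habs : |a + b| = |a - b| :=
        mul_right_cancel₀ hvn (hax.trans hay.symm)
      have ha0 : a ≠ 0 := by
        intro hc0
        have hw0 : w = 0 := by rw [hwa, hc0, zero_smul]
        rw [hw0] at hw1
        simp at hw1
      have hb0 : b = 0 := by
        rcases abs_eq_abs.mp habs with h' | h'
        · linarith
        · exact absurd (by linarith : a = 0) ha0
      exact hz0 (by rw [hzb, hb0, zero_smul])
    have hle1 : ∀ p : E, Measure.dirac p L ≤ 1 := fun p => prob_le_one
    have hzero : ∀ p : E, p ∉ L → Measure.dirac p L = 0 := by
      intro p hp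
      rw [Measure.dirac_apply, Set.indicator_of_notMem hp]
    have hsum : Measure.dirac w L + Measure.dirac (-w) L + Measure.dirac z L
        + Measure.dirac (-z) L ≤ 3 := by
      have b3 : (3:ℝ≥0∞) = 0 + 1 + 1 + 1 := by norm_num
      have b3' : (3:ℝ≥0∞) = 1 + 0 + 1 + 1 := by norm_num
      have b3'' : (3:ℝ≥0∞) = 1 + 1 + 0 + 1 := by norm_num
      have b3''' : (3:ℝ≥0∞) = 1 + 1 + 1 + 0 := by norm_num
      rcases key with hk | hk | hk | hk
      · rw [b3]; exact add_le_add (add_le_add (add_le_add (hzero _ hk).le (hle1 _)) (hle1 _)) (hle1 _)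
      · rw [b3']; exact add_le_add (add_le_add (add_le_add (hle1 _) (hzero _ hk).le) (hle1 _)) (hle1 _)
      · rw [b3'']; exact add_le_add (add_le_add (add_le_add (hle1 _) (hle1 _)) (hzero _ hk).le) (hle1 _)
      · rw [b3''']; exact add_le_add (add_le_add (add_le_add (hle1 _) (hle1 _)) (hle1 _)) (hzero _ hk).le
    have hμL : μ L = 4⁻¹ * (Measure.dirac w L + Measure.dirac (-w) L + Measure.dirac z L
        + Measure.dirac (-z) L) := by
      rw [hμ_def]
      simp only [Measure.smul_apply, Measure.add_apply, smul_eq_mul]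
    calc μ L ≤ 4⁻¹ * 3 := by rw [hμL]; exact mul_le_mul_right hsum _
      _ < 1 := by
          rw [show (1:ℝ≥0∞) = 4⁻¹ * 4 by rw [ENNReal.inv_mul_cancel] <;> norm_num]
          exact (ENNReal.mul_lt_mul_iff_right (by norm_num) (by norm_num)).mpr (by norm_num)
  -- integral computation
  have hint : ∀ a : E, (∫ xx, (‖a - xx‖ - ‖xx‖) ∂μ) =
      4⁻¹ * ((‖a - w‖ - ‖w‖) + (‖a - -w‖ - ‖-w‖) + (‖a - z‖ - ‖z‖) + (‖a - -z‖ - ‖-z‖)) := by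
    intro a
    have hc : Continuous fun xx : E => ‖a - xx‖ - ‖xx‖ := by fun_prop
    have hInt : ∀ p : E, Integrable (fun xx : E => ‖a - xx‖ - ‖xx‖) (Measure.dirac p) :=
      fun p => ⟨hc.aestronglyMeasurable, by simp [HasFiniteIntegral, lintegral_dirac]⟩
    rw [hμ_def, integral_smul_measure]
    rw [integral_add_measure (((hInt w).add_measure (hInt (-w))).add_measure (hInt z)) (hInt (-z))]
    rw [integral_add_measure ((hInt w).add_measure (hInt (-w))) (hInt z)]
    rw [integral_add_measure (hInt w) (hInt (-w))]
    rw [integral_dirac, integral_dirac, integral_dirac, integral_dirac]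
    rw [smul_eq_mul]
    norm_num [ENNReal.toReal_inv]
  -- minimality
  have hkey : ∀ a : E, 0 ≤ (‖a - w‖ - ‖w‖) + (‖a - -w‖ - ‖-w‖) + (‖a - z‖ - ‖z‖)
      + (‖a - -z‖ - ‖-z‖) := by
    intro a
    have h1 : ‖w + w‖ ≤ ‖a - -w‖ + ‖a - w‖ := by
      have := norm_sub_le (a - -w) (a - w)
      have he : (a - -w) - (a - w) = w + w := by abel
      rwa [he] at this
    have h2 : ‖z + z‖ ≤ ‖a - -z‖ + ‖a - z‖ := by
      have := norm_sub_le (a - -z) (a - z)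
      have he : (a - -z) - (a - z) = z + z := by abel
      rwa [he] at this
    have hww : ‖w + w‖ = ‖w‖ + ‖w‖ := by
      have : w + w = (2:ℝ) • w := by module
      rw [this, norm_smul]; simp [hw1]; norm_num
    have hzz : ‖z + z‖ = ‖z‖ + ‖z‖ := by
      have : z + z = (2:ℝ) • z := by module
      rw [this, norm_smul]; norm_num; ring
    rw [hww] at h1
    rw [hzz] at h2
    simp only [norm_neg]
    linarith
  have hmin : ∀ c : E, ((‖c - w‖ - ‖w‖) + (‖c - -w‖ - ‖-w‖) + (‖c - z‖ - ‖z‖)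
      + (‖c - -z‖ - ‖-z‖) = 0) →
      c ∈ {α : E | IsMinOn (fun a : E => ∫ xx, (‖a - xx‖ - ‖xx‖) ∂μ) Set.univ α} := by
    intro c hc
    rw [Set.mem_setOf_eq, isMinOn_univ_iff]
    intro a
    rw [hint, hint, hc]
    have := hkey a
    nlinarith [hkey a]
  have h0mem : (0:E) ∈ {α : E | IsMinOn (fun a : E => ∫ xx, (‖a - xx‖ - ‖xx‖) ∂μ) Set.univ α} := by
    apply hmin
    simp only [zero_sub, norm_neg]
    ring
  have hzmem : z ∈ {α : E | IsMinOn (fun a : E => ∫ xx, (‖a - xx‖ - ‖xx‖) ∂μ) Set.univ α} := by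
    apply hmin
    have e1 : z - w = -y := by rw [← hwz_sub]; abel
    have e2 : z - -w = x := by rw [← hwz_add]; abel
    have e3 : z - -z = (2:ℝ) • z := by module
    rw [e1, e2, e3, norm_neg y, hy, hx, sub_self, norm_zero, norm_neg z, norm_neg w, hw1,
      norm_smul (2:ℝ) z, Real.norm_two]
    ring
  have := h μ hprob hline hzmem h0mem
  exact hz0 this
end

section
/- If E is strictly convex and μ is a Borel probability measure concentrated on an affine line L (μ(L) = 1), then the set of geometric medians of μ is a nonempty closed line segment contained in L. -/
open MeasureTheory

section Aux
variable {E : Type*} [NormedAddCommGroup E] [NormedSpace ℝ E]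
  [MeasurableSpace E] [BorelSpace E]
  (μ : Measure E) [IsProbabilityMeasure μ]

noncomputable def phiAux (c : E) : ℝ := ∫ x, (‖c - x‖ - ‖x‖) ∂μ

lemma phiAux_integrable (c : E) : Integrable (fun x => ‖c - x‖ - ‖x‖) μ := by
  refine (integrable_const ‖c‖).mono' ?_ ?_
  · exact ((continuous_const.sub continuous_id).norm.sub continuous_norm).aestronglyMeasurable
  · filter_upwards with x
    have h := abs_norm_sub_norm_le (c - x) (-x)
    simp only [norm_neg, sub_neg_eq_add, sub_add_cancel] at h
    simpa [Real.norm_eq_abs] using h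

lemma phiAux_lipschitz : LipschitzWith 1 (phiAux μ) := by
  refine LipschitzWith.of_dist_le_mul fun c c' => ?_
  rw [Real.dist_eq, NNReal.coe_one, one_mul, dist_eq_norm]
  have h : phiAux μ c - phiAux μ c' = ∫ x, (‖c - x‖ - ‖c' - x‖) ∂μ := by
    rw [phiAux, phiAux, ← integral_sub (phiAux_integrable μ c) (phiAux_integrable μ c')]
    congr 1; ext x; ring
  rw [h]
  calc |∫ x, (‖c - x‖ - ‖c' - x‖) ∂μ| ≤ ∫ x, |‖c - x‖ - ‖c' - x‖| ∂μ := by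
        simpa [Real.norm_eq_abs] using
          norm_integral_le_integral_norm (μ := μ) (fun x => ‖c - x‖ - ‖c' - x‖)
    _ ≤ ∫ _x, ‖c - c'‖ ∂μ := by
        refine integral_mono_of_nonneg (Filter.Eventually.of_forall fun x => abs_nonneg _)
          (integrable_const _) (Filter.Eventually.of_forall fun x => ?_)
        have h2 := abs_norm_sub_norm_le (c - x) (c' - x)
        simpa [sub_sub_sub_cancel_right] using h2
    _ = ‖c - c'‖ := by simp

lemma phiAux_convexOn : ConvexOn ℝ Set.univ (phiAux μ) := by
  refine ⟨convex_univ, fun a _ b _ p q hp hq hpq => ?_⟩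
  simp only [smul_eq_mul]
  have key : ∀ x : E, ‖(p • a + q • b) - x‖ - ‖x‖ ≤
      p * (‖a - x‖ - ‖x‖) + q * (‖b - x‖ - ‖x‖) := by
    intro x
    have hx : (p • a + q • b) - x = p • (a - x) + q • (b - x) := by
      have h1 : p • x + q • x = x := by rw [← add_smul, hpq, one_smul]
      calc (p • a + q • b) - x = (p • a + q • b) - (p • x + q • x) := by rw [h1]
        _ = p • (a - x) + q • (b - x) := by rw [smul_sub, smul_sub]; abel
    have hn : ‖(p • a + q • b) - x‖ ≤ p * ‖a - x‖ + q * ‖b - x‖ := by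
      rw [hx]
      calc ‖p • (a - x) + q • (b - x)‖ ≤ ‖p • (a - x)‖ + ‖q • (b - x)‖ := norm_add_le _ _
        _ = p * ‖a - x‖ + q * ‖b - x‖ := by
            rw [norm_smul, norm_smul, Real.norm_eq_abs, Real.norm_eq_abs,
              abs_of_nonneg hp, abs_of_nonneg hq]
    have hXX : p * ‖x‖ + q * ‖x‖ = ‖x‖ := by rw [← add_mul, hpq, one_mul]
    linarith [hn]
  calc phiAux μ (p • a + q • b)
      ≤ ∫ x, (p * (‖a - x‖ - ‖x‖) + q * (‖b - x‖ - ‖x‖)) ∂μ := by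
        refine integral_mono (phiAux_integrable μ _) ?_ key
        exact ((phiAux_integrable μ a).const_mul p).add ((phiAux_integrable μ b).const_mul q)
    _ = p * phiAux μ a + q * phiAux μ b := by
        rw [integral_add ((phiAux_integrable μ a).const_mul p)
          ((phiAux_integrable μ b).const_mul q), integral_const_mul, integral_const_mul]
        rfl

lemma phiAux_coercive : ∃ R : ℝ, 0 ≤ R ∧ ∀ c : E, R ≤ ‖c‖ → ‖c‖ / 2 - 3 * R / 2 ≤ phiAux μ c := by
  -- find R with μ (closedBall 0 R) ≥ 3/4
  have hmono : Monotone (fun n : ℕ => Metric.closedBall (0 : E) n) := by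
    intro m n hmn
    exact Metric.closedBall_subset_closedBall (by exact_mod_cast hmn)
  have hunion : (⋃ n : ℕ, Metric.closedBall (0 : E) n) = Set.univ := by
    ext x
    simp only [Set.mem_iUnion, Metric.mem_closedBall, dist_zero_right, Set.mem_univ, iff_true]
    obtain ⟨n, hn⟩ := exists_nat_ge ‖x‖
    exact ⟨n, hn⟩
  have htend := tendsto_measure_iUnion_atTop (μ := μ) hmono
  rw [hunion, measure_univ] at htend
  have hev : ∀ᶠ n : ℕ in Filter.atTop, (3/4 : ENNReal) < μ (Metric.closedBall (0 : E) n) :=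
    htend.eventually_const_lt (by
      rw [ENNReal.div_lt_iff (by norm_num) (by norm_num)]; norm_num)
  obtain ⟨n, hn⟩ := hev.exists
  refine ⟨n, Nat.cast_nonneg n, fun c hc => ?_⟩
  set B := Metric.closedBall (0 : E) (n : ℝ) with hB
  have hBmeas : MeasurableSet B := Metric.isClosed_closedBall.measurableSet
  set m : ℝ := (μ B).toReal with hm
  have hmle : (3/4 : ℝ) ≤ m := by
    rw [hm]
    rw [show ((3:ℝ)/4) = ((3/4 : ENNReal)).toReal by rw [ENNReal.toReal_div]; norm_num]
    exact ENNReal.toReal_le_toReal (by simp [ENNReal.div_eq_top]) (measure_ne_top μ B) |>.mpr hn.le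
  -- lower bound function
  have hptwise : ∀ x : E, B.indicator (fun _ => 2 * ‖c‖ - 2 * n) x - ‖c‖ ≤ ‖c - x‖ - ‖x‖ := by
    intro x
    by_cases hx : x ∈ B
    · rw [Set.indicator_of_mem hx]
      have hxn : ‖x‖ ≤ n := by simpa [hB, dist_zero_right] using hx
      have := norm_sub_norm_le c x
      have h2 : ‖c‖ - ‖x‖ ≤ ‖c - x‖ := by
        have := norm_sub_norm_le c x; linarith [this]
      linarith
    · rw [Set.indicator_of_notMem hx]
      have h2 : ‖x‖ - ‖c‖ ≤ ‖c - x‖ := by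
        have := norm_sub_norm_le x c
        calc ‖x‖ - ‖c‖ ≤ ‖x - c‖ := this
          _ = ‖c - x‖ := norm_sub_rev x c
      linarith
  have hind : Integrable (fun x => B.indicator (fun _ => 2 * ‖c‖ - 2 * (n:ℝ)) x - ‖c‖) μ := by
    exact ((integrable_const _).indicator hBmeas).sub (integrable_const _)
  have hlow : ∫ x, (B.indicator (fun _ => 2 * ‖c‖ - 2 * (n:ℝ)) x - ‖c‖) ∂μ ≤ phiAux μ c :=
    integral_mono hind (phiAux_integrable μ c) hptwise
  have hcalc : ∫ x, (B.indicator (fun _ => 2 * ‖c‖ - 2 * (n:ℝ)) x - ‖c‖) ∂μ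
      = (2 * ‖c‖ - 2 * n) * m - ‖c‖ := by
    rw [integral_sub ((integrable_const _).indicator hBmeas) (integrable_const _),
      integral_indicator_const _ hBmeas, integral_const]
    simp [hm, mul_comm]
    exact Or.inl rfl
  rw [hcalc] at hlow
  have hnn : 0 ≤ 2 * ‖c‖ - 2 * n := by linarith
  have : (2 * ‖c‖ - 2 * (n:ℝ)) * (3/4) ≤ (2 * ‖c‖ - 2 * n) * m :=
    mul_le_mul_of_nonneg_left hmle hnn
  nlinarith

end Aux

/-- If `E` is strictly convex and `μ` is concentrated on an affine line `L`, then the set of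
geometric medians of `μ` is a nonempty closed line segment contained in `L`. -/
theorem stmt10 {E : Type*} [NormedAddCommGroup E] [NormedSpace ℝ E] [StrictConvexSpace ℝ E]
    [MeasurableSpace E] [BorelSpace E]
    (μ : Measure E) [IsProbabilityMeasure μ]
    (u v : E) (hv : v ≠ 0)
    (hμ : μ (Set.range fun t : ℝ => u + t • v) = 1) :
    ∃ a b : E, a ∈ Set.range (fun t : ℝ => u + t • v) ∧
      b ∈ Set.range (fun t : ℝ => u + t • v) ∧
      {α : E | IsMinOn (fun c : E => ∫ x, (‖c - x‖ - ‖x‖) ∂μ) Set.univ α} =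
        segment ℝ a b := by
  classical
  obtain ⟨g, hg1, hgv'⟩ := exists_dual_vector ℝ v (norm_ne_zero_iff.mpr hv)
  have hgv : g v = ‖v‖ := by exact_mod_cast hgv'
  have hvpos : (0:ℝ) < ‖v‖ := norm_pos_iff.mpr hv
  set L : Set E := Set.range (fun t : ℝ => u + t • v) with hLdef
  have hLim : L = (fun w => u + w) '' ((Submodule.span ℝ {v} : Submodule ℝ E) : Set E) := by
    ext y
    constructor
    · rintro ⟨t, rfl⟩
      exact ⟨t • v, Submodule.smul_mem _ t (Submodule.mem_span_singleton_self v), rfl⟩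
    · rintro ⟨w, hw, rfl⟩
      obtain ⟨t, rfl⟩ := Submodule.mem_span_singleton.mp hw
      exact ⟨t, rfl⟩
  have hLclosed : IsClosed L := by
    rw [hLim]
    exact (Homeomorph.addLeft u).isClosedMap _ (Submodule.closed_of_finiteDimensional _)
  have hae : ∀ᵐ x ∂μ, x ∈ L := by
    have h0 : μ Lᶜ = 0 := (prob_compl_eq_zero_iff hLclosed.measurableSet).mpr hμ
    rw [ae_iff]
    exact h0
  -- projection onto L
  set P : E → E := fun c => u + (g (c - u) / ‖v‖) • v with hPdef
  have hPeq : ∀ c, ∀ x ∈ L, ‖P c - x‖ = |g (c - x)| := by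
    rintro c x ⟨s, rfl⟩
    have h1 : P c - (u + s • v) = (g (c - u) / ‖v‖ - s) • v := by
      simp only [hPdef]
      rw [sub_smul]
      abel
    show ‖P c - (u + s • v)‖ = |g (c - (u + s • v))|
    rw [h1, norm_smul, Real.norm_eq_abs]
    have h2 : (g (c - u) / ‖v‖ - s) * ‖v‖ = g (c - u) - s * ‖v‖ := by
      field_simp
    calc |g (c - u) / ‖v‖ - s| * ‖v‖
        = |(g (c - u) / ‖v‖ - s) * ‖v‖| := by rw [abs_mul, abs_of_pos hvpos]
      _ = |g (c - u) - s * ‖v‖| := by rw [h2]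
      _ = |g (c - (u + s • v))| := by
          rw [← hgv, show s * g v = g (s • v) from (g.map_smul s v).symm, ← g.map_sub]
          congr 2
          abel
  have hPle : ∀ c, ∀ x ∈ L, ‖P c - x‖ ≤ ‖c - x‖ := by
    intro c x hx
    rw [hPeq c x hx]
    calc |g (c - x)| = ‖g (c - x)‖ := (Real.norm_eq_abs _).symm
      _ ≤ ‖g‖ * ‖c - x‖ := g.le_opNorm _
      _ = ‖c - x‖ := by rw [hg1, one_mul]
  have hPphi : ∀ c, phiAux μ (P c) ≤ phiAux μ c := by
    intro c
    refine integral_mono_ae (phiAux_integrable μ _) (phiAux_integrable μ _) ?_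
    filter_upwards [hae] with x hx
    exact sub_le_sub_right (hPle c x hx) ‖x‖
  -- strict convexity: norming direction is unique
  have hray : ∀ y : E, g y = ‖y‖ → ∃ r : ℝ, y = r • v := by
    intro y hy
    have hge : ‖y‖ + ‖v‖ ≤ ‖y + v‖ := by
      calc ‖y‖ + ‖v‖ = g (y + v) := by rw [g.map_add, hy, hgv]
        _ ≤ |g (y + v)| := le_abs_self _
        _ = ‖g (y + v)‖ := (Real.norm_eq_abs _).symm
        _ ≤ ‖g‖ * ‖y + v‖ := g.le_opNorm _
        _ = ‖y + v‖ := by rw [hg1, one_mul]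
    have hsr : SameRay ℝ y v := sameRay_iff_norm_add.mpr (le_antisymm (norm_add_le _ _) hge)
    obtain ⟨r, -, hr⟩ := hsr.exists_nonneg_right hv
    exact ⟨r, hr⟩
  -- equality case: a minimizer-like point is on L
  have hEqL : ∀ c, phiAux μ c ≤ phiAux μ (P c) → c ∈ L := by
    intro c hc
    have heq : phiAux μ c = phiAux μ (P c) := le_antisymm hc (hPphi c)
    have hintzero : ∫ x, ((‖c - x‖ - ‖x‖) - (‖P c - x‖ - ‖x‖)) ∂μ = 0 := by
      rw [integral_sub (phiAux_integrable μ c) (phiAux_integrable μ (P c))]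
      exact sub_eq_zero_of_eq heq
    have hnn : 0 ≤ᵐ[μ] fun x => (‖c - x‖ - ‖x‖) - (‖P c - x‖ - ‖x‖) := by
      filter_upwards [hae] with x hx
      have := hPle c x hx
      simp only [Pi.zero_apply]
      linarith
    have hzero : (fun x => (‖c - x‖ - ‖x‖) - (‖P c - x‖ - ‖x‖)) =ᵐ[μ] 0 :=
      (integral_eq_zero_iff_of_nonneg_ae hnn
        ((phiAux_integrable μ c).sub (phiAux_integrable μ (P c)))).mp hintzero
    haveI : (ae μ).NeBot := ae_neBot.mpr (IsProbabilityMeasure.ne_zero μ)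
    obtain ⟨x, hx0, hxL⟩ := (hzero.and hae).exists
    have hxeq : ‖P c - x‖ = ‖c - x‖ := by
      have h0 : (‖c - x‖ - ‖x‖) - (‖P c - x‖ - ‖x‖) = 0 := hx0
      linarith
    have habs : |g (c - x)| = ‖c - x‖ := by rw [← hPeq c x hxL, hxeq]
    obtain ⟨s, rfl⟩ := hxL
    rcases abs_cases (g (c - (u + s • v))) with ⟨h1, -⟩ | ⟨h1, -⟩
    · obtain ⟨r, hr⟩ := hray _ (by rw [← h1, habs])
      refine ⟨s + r, ?_⟩
      show u + (s + r) • v = c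
      have hc' : c = (u + s • v) + r • v := by rw [← hr]; abel
      rw [hc', add_smul]
      abel
    · obtain ⟨r, hr⟩ := hray (-(c - (u + s • v))) (by rw [map_neg, norm_neg, ← habs, h1])
      refine ⟨s - r, ?_⟩
      show u + (s - r) • v = c
      have hc' : c = (u + s • v) - r • v := by
        rw [← hr]; abel
      rw [hc', sub_smul]
      abel
  -- the one-dimensional restriction
  set f : ℝ → ℝ := fun t => phiAux μ (u + t • v) with hfdef
  have hfcont : Continuous f :=
    (phiAux_lipschitz μ).continuous.comp (continuous_const.add (continuous_id.smul continuous_const))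
  have hA : ∀ t : ℝ, (AffineMap.lineMap u (u + v) : ℝ →ᵃ[ℝ] E) t = u + t • v := by
    intro t
    rw [AffineMap.lineMap_apply]
    simp only [vsub_eq_sub, vadd_eq_add, add_sub_cancel_left]
    abel
  have hfun : (fun t : ℝ => u + t • v) = (AffineMap.lineMap u (u + v) : ℝ →ᵃ[ℝ] E) := by
    funext t
    exact (hA t).symm
  have hfconv : ConvexOn ℝ Set.univ f := by
    have h := (phiAux_convexOn μ).comp_affineMap (AffineMap.lineMap u (u + v) : ℝ →ᵃ[ℝ] E)
    simp only [Set.preimage_univ] at h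
    have hfeq : f = (phiAux μ) ∘ (AffineMap.lineMap u (u + v) : ℝ →ᵃ[ℝ] E) := by
      funext t
      simp only [hfdef, Function.comp_apply, hA t]
    rw [hfeq]
    exact h
  -- bounded sublevel sets
  obtain ⟨R, hR0, hcoer⟩ := phiAux_coercive μ
  set C : ℝ := max R (3 * R + 2 * f 0) with hCdef
  have hsub : ∀ c : E, phiAux μ c ≤ f 0 → ‖c‖ ≤ C := by
    intro c hcle
    by_contra hgt
    push_neg at hgt
    have h1 : R ≤ ‖c‖ := le_trans (le_max_left _ _) hgt.le
    have h2 := hcoer c h1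
    have h3 : 3 * R + 2 * f 0 < ‖c‖ := lt_of_le_of_lt (le_max_right _ _) hgt
    linarith
  set T1 : ℝ := (C + ‖u‖) / ‖v‖ with hT1def
  have hsubt : ∀ t : ℝ, f t ≤ f 0 → |t| ≤ T1 := by
    intro t ht
    have h1 : ‖u + t • v‖ ≤ C := hsub _ ht
    have h2 : ‖t • v‖ ≤ ‖u + t • v‖ + ‖u‖ := by
      have h := norm_sub_le (u + t • v) u
      rwa [add_sub_cancel_left] at h
    have h3 : |t| * ‖v‖ ≤ C + ‖u‖ := by
      rw [← Real.norm_eq_abs, ← norm_smul]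
      linarith
    rw [hT1def, le_div_iff₀ hvpos]
    exact h3
  set T' : ℝ := max T1 0 with hT'def
  have h0mem : (0:ℝ) ∈ Set.Icc (-T') T' := by
    constructor
    · simp [hT'def]
    · exact le_max_right _ _
  obtain ⟨t₀, ht₀mem, ht₀min⟩ := isCompact_Icc.exists_isMinOn ⟨0, h0mem⟩ hfcont.continuousOn
  have hmemIcc : ∀ t : ℝ, f t ≤ f 0 → t ∈ Set.Icc (-T') T' := by
    intro t ht
    have h := hsubt t ht
    constructor
    · have := neg_abs_le t
      have hT1T' : T1 ≤ T' := le_max_left _ _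
      linarith
    · have := le_abs_self t
      have hT1T' : T1 ≤ T' := le_max_left _ _
      linarith
  have ht₀glob : ∀ t, f t₀ ≤ f t := by
    intro t
    by_cases ht : t ∈ Set.Icc (-T') T'
    · exact (isMinOn_iff.mp ht₀min) t ht
    · have h2 : f t₀ ≤ f 0 := (isMinOn_iff.mp ht₀min) 0 h0mem
      by_contra hlt
      push_neg at hlt
      exact ht (hmemIcc t (by linarith))
  -- the argmin set on the line
  set T : Set ℝ := {t | ∀ s, f t ≤ f s} with hTdef
  have ht₀T : t₀ ∈ T := ht₀glob
  have hTle : T = {t | f t ≤ f t₀} := by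
    ext t
    constructor
    · intro ht
      exact ht t₀
    · intro ht s
      exact le_trans ht (ht₀glob s)
  have hTclosed : IsClosed T := by
    rw [hTle]
    exact isClosed_le hfcont continuous_const
  have hTbdd : T ⊆ Set.Icc (-T') T' := fun t ht => hmemIcc t (ht 0)
  have hTcompact : IsCompact T := isCompact_Icc.of_isClosed_subset hTclosed hTbdd
  have hTconvex : Convex ℝ T := by
    rw [hTle]
    have h := hfconv.convex_le (f t₀)
    simpa using h
  have hTconn : IsConnected T := ⟨⟨t₀, ht₀T⟩, hTconvex.isPreconnected⟩
  have hTIcc : T = Set.Icc (sInf T) (sSup T) := eq_Icc_of_connected_compact hTconn hTcompact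
  have ht12 : sInf T ≤ sSup T := csInf_le_csSup ⟨t₀, ht₀T⟩ hTcompact.bddBelow hTcompact.bddAbove
  refine ⟨u + sInf T • v, u + sSup T • v, ⟨sInf T, rfl⟩, ⟨sSup T, rfl⟩, ?_⟩
  have hMeq : {α : E | IsMinOn (fun c : E => ∫ x, (‖c - x‖ - ‖x‖) ∂μ) Set.univ α}
      = (fun t : ℝ => u + t • v) '' T := by
    ext α
    simp only [Set.mem_setOf_eq, isMinOn_iff, Set.mem_univ, forall_true_left]
    constructor
    · intro hmin
      have hle : phiAux μ α ≤ phiAux μ (P α) := hmin (P α)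
      have hαL : α ∈ L := hEqL α hle
      obtain ⟨t, ht⟩ := hαL
      have ht' : u + t • v = α := ht
      refine ⟨t, ?_, ht⟩
      intro s
      have h1 : f t = phiAux μ α := by rw [hfdef]; simp only; rw [ht']
      have h2 : phiAux μ α ≤ phiAux μ (u + s • v) := hmin (u + s • v)
      rw [hfdef]
      calc f t = phiAux μ α := h1
        _ ≤ phiAux μ (u + s • v) := h2
    · rintro ⟨t, htT, rfl⟩
      intro c
      have h1 : f t ≤ f (g (c - u) / ‖v‖) := htT _
      have h2 : phiAux μ (P c) ≤ phiAux μ c := hPphi c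
      exact le_trans h1 h2
  rw [hMeq]
  conv_lhs => rw [hTIcc]
  rw [show Set.Icc (sInf T) (sSup T) = segment ℝ (sInf T) (sSup T) from
    (segment_eq_Icc ht12).symm, hfun, image_segment, hA, hA]
end

section
/- Every Borel probability measure μ on a normed space E that is not concentrated on a line is uniformly separated from 1 on affine lines: there exists δ ∈ (0,1] such that μ(L) ≤ 1 - δ for every affine line L. -/
open MeasureTheory
open scoped ENNReal

lemma stmt11_line_meas {E : Type*} [NormedAddCommGroup E] [NormedSpace ℝ E]
    [MeasurableSpace E] [BorelSpace E] (u v : E) :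
    MeasurableSet (Set.range fun t : ℝ => u + t • v) := by
  have h : (Set.range fun t : ℝ => u + t • v)
      = (u + ·) '' ((Submodule.span ℝ {v} : Submodule ℝ E) : Set E) := by
    ext x
    simp only [Set.mem_range, Set.mem_image, SetLike.mem_coe, Submodule.mem_span_singleton]
    constructor
    · rintro ⟨t, rfl⟩; exact ⟨t • v, ⟨t, rfl⟩, rfl⟩
    · rintro ⟨w, ⟨t, rfl⟩, rfl⟩; exact ⟨t, rfl⟩
  rw [h]
  exact ((Homeomorph.addLeft u).isClosedMap _
    (Submodule.closed_of_finiteDimensional _)).measurableSet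

lemma stmt11_line_det {E : Type*} [AddCommGroup E] [Module ℝ E] {u v x y : E}
    (hxy : x ≠ y) (hx : x ∈ Set.range fun t : ℝ => u + t • v)
    (hy : y ∈ Set.range fun t : ℝ => u + t • v) :
    (Set.range fun t : ℝ => u + t • v) = Set.range fun t : ℝ => x + t • (y - x) := by
  obtain ⟨a, rfl⟩ := hx
  obtain ⟨b, hb⟩ := hy
  have hb' : u + b • v = y := hb
  have hyx : y - (u + a • v) = (b - a) • v := by rw [← hb']; module
  have hba : b - a ≠ 0 := by
    intro h
    apply hxy
    rw [h, zero_smul] at hyx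
    rw [sub_eq_zero] at hyx
    exact hyx.symm
  ext z
  simp only [Set.mem_range]
  constructor
  · rintro ⟨t, rfl⟩
    refine ⟨(t - a) / (b - a), ?_⟩
    rw [hyx, smul_smul, div_mul_cancel₀ _ hba]
    module
  · rintro ⟨s, rfl⟩
    refine ⟨a + s * (b - a), ?_⟩
    rw [hyx, smul_smul]
    module

lemma stmt11_inter_subsingleton {E : Type*} [AddCommGroup E] [Module ℝ E] {u v u' v' : E}
    (h : (Set.range fun t : ℝ => u + t • v) ≠ Set.range fun t : ℝ => u' + t • v') :
    ((Set.range fun t : ℝ => u + t • v) ∩ Set.range fun t : ℝ => u' + t • v').Subsingleton := by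
  intro x hx y hy
  by_contra hxy
  exact h ((stmt11_line_det hxy hx.1 hy.1).trans (stmt11_line_det hxy hx.2 hy.2).symm)

/-- A Borel probability measure not concentrated on a line is uniformly separated from `1`
on affine lines: there exists `δ ∈ (0, 1]` with `μ(L) ≤ 1 - δ` for every affine line `L`. -/
theorem stmt11 {E : Type*} [NormedAddCommGroup E] [NormedSpace ℝ E]
    [MeasurableSpace E] [BorelSpace E]
    (μ : Measure E) [IsProbabilityMeasure μ]
    (hμ : ∀ u v : E, v ≠ 0 → μ (Set.range fun t : ℝ => u + t • v) < 1) :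
    ∃ δ : ℝ, δ ∈ Set.Ioc (0 : ℝ) 1 ∧ ∀ u v : E, v ≠ 0 →
      μ (Set.range fun t : ℝ => u + t • v) ≤ ENNReal.ofReal (1 - δ) := by
  by_contra hcon
  push_neg at hcon
  -- from the negation: for every `a < 1` there is a line of measure `> a`
  have key : ∀ a : ℝ≥0∞, a < 1 →
      ∃ u v : E, v ≠ 0 ∧ a < μ (Set.range fun t : ℝ => u + t • v) := by
    intro a ha
    have haT : a ≠ ⊤ := ha.ne_top
    have ha' : a.toReal < 1 := by
      have := (ENNReal.toReal_lt_toReal haT ENNReal.one_ne_top).mpr ha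
      simpa using this
    have h0 : (0:ℝ) ≤ a.toReal := ENNReal.toReal_nonneg
    obtain ⟨u, v, hv, hlt⟩ := hcon ((1 - a.toReal) / 2)
      ⟨by linarith, by linarith⟩
    refine ⟨u, v, hv, lt_of_le_of_lt ?_ hlt⟩
    conv_lhs => rw [← ENNReal.ofReal_toReal haT]
    exact ENNReal.ofReal_le_ofReal (by linarith)
  -- for every `a < 1` there is a point `p` with `a + a < 1 + μ {p}`
  have point : ∀ a : ℝ≥0∞, a < 1 → ∃ p : E, a + a < 1 + μ {p} := by
    intro a ha
    obtain ⟨u, v, hv, h1⟩ := key a ha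
    obtain ⟨u', v', hv', h2⟩ := key _ (hμ u v hv)
    have hne : (Set.range fun t : ℝ => u + t • v)
        ≠ Set.range fun t : ℝ => u' + t • v' := fun h => lt_irrefl _ (h ▸ h2)
    have hsub := stmt11_inter_subsingleton (E := E) hne
    have hsum : μ ((Set.range fun t : ℝ => u + t • v) ∪ Set.range fun t : ℝ => u' + t • v')
          + μ ((Set.range fun t : ℝ => u + t • v) ∩ Set.range fun t : ℝ => u' + t • v')
        = μ (Set.range fun t : ℝ => u + t • v) + μ (Set.range fun t : ℝ => u' + t • v') :=
      measure_union_add_inter _ (stmt11_line_meas u' v')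
    have h3 : a + a < 1
        + μ ((Set.range fun t : ℝ => u + t • v) ∩ Set.range fun t : ℝ => u' + t • v') := by
      calc a + a < μ (Set.range fun t : ℝ => u + t • v)
            + μ (Set.range fun t : ℝ => u' + t • v') :=
          ENNReal.add_lt_add h1 (h1.trans h2)
        _ = _ + _ := hsum.symm
        _ ≤ 1 + μ ((Set.range fun t : ℝ => u + t • v)
            ∩ Set.range fun t : ℝ => u' + t • v') :=
          add_le_add_left prob_le_one _
    rcases hsub.eq_empty_or_singleton with h | ⟨p, h⟩
    · rw [h] at h3
      simp only [measure_empty, add_zero] at h3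
      exact ⟨0, h3.trans_le (le_add_right le_rfl)⟩
    · rw [h] at h3
      exact ⟨p, h3⟩
  -- first point: an atom of mass `> 1/2`
  obtain ⟨p, hp⟩ := point (ENNReal.ofReal (3/4)) (by
    rw [← ENNReal.ofReal_one]
    exact (ENNReal.ofReal_lt_ofReal_iff one_pos).mpr (by norm_num))
  have hp2 : ENNReal.ofReal (1/2) < μ {p} := by
    by_contra h
    push_neg at h
    have h4 : (1:ℝ≥0∞) + μ {p} ≤ ENNReal.ofReal 1 + ENNReal.ofReal (1/2) := by
      rw [ENNReal.ofReal_one]; exact add_le_add_right h 1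
    have h5 := hp.trans_le h4
    rw [← ENNReal.ofReal_add (by norm_num) (by norm_num),
      ← ENNReal.ofReal_add (by norm_num) (by norm_num)] at h5
    exact absurd ((ENNReal.ofReal_lt_ofReal_iff (by norm_num)).mp h5) (by norm_num)
  -- the atom has mass `< 1`
  obtain ⟨u₀, v₀, hv₀, -⟩ := key 0 zero_lt_one
  have hp1 : μ {p} < 1 := by
    refine lt_of_le_of_lt (measure_mono ?_) (hμ p v₀ hv₀)
    rintro x rfl
    exact ⟨0, by simp⟩
  -- second point: an atom strictly bigger than `μ {p}`
  have hpT : μ {p} ≠ ⊤ := hp1.ne_top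
  have hptr : (μ {p}).toReal < 1 := by
    have := (ENNReal.toReal_lt_toReal hpT ENNReal.one_ne_top).mpr hp1
    simpa using this
  set a : ℝ≥0∞ := ENNReal.ofReal ((1 + (μ {p}).toReal) / 2) with ha_def
  have haa : a + a = 1 + μ {p} := by
    rw [ha_def, ← ENNReal.ofReal_add (by linarith [ENNReal.toReal_nonneg (a := μ {p})])
      (by linarith [ENNReal.toReal_nonneg (a := μ {p})]),
      show (1 + (μ {p}).toReal) / 2 + (1 + (μ {p}).toReal) / 2 = 1 + (μ {p}).toReal by ring,
      ENNReal.ofReal_add (by norm_num) ENNReal.toReal_nonneg,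
      ENNReal.ofReal_one, ENNReal.ofReal_toReal hpT]
  have ha1 : a < 1 := by
    rw [ha_def, ← ENNReal.ofReal_one]
    exact ENNReal.ofReal_lt_ofReal_iff (by norm_num) |>.mpr (by linarith)
  obtain ⟨q, hq⟩ := point a ha1
  rw [haa] at hq
  have hq2 : μ {p} < μ {q} := by
    exact lt_of_add_lt_add_left hq
  rcases eq_or_ne q p with rfl | hqp
  · exact lt_irrefl _ hq2
  · have hdisj : Disjoint ({p} : Set E) {q} := by simpa using hqp.symm
    have : μ {p} + μ {q} = μ ({p} ∪ {q}) :=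
      (measure_union hdisj (measurableSet_singleton q)).symm
    have hle : μ {p} + μ {q} ≤ 1 := this.trans_le prob_le_one
    have hlt : ENNReal.ofReal (1/2) + ENNReal.ofReal (1/2) < μ {p} + μ {q} :=
      ENNReal.add_lt_add hp2 (hp2.trans hq2)
    rw [← ENNReal.ofReal_add (by norm_num) (by norm_num),
      show (1:ℝ)/2 + 1/2 = 1 by norm_num, ENNReal.ofReal_one] at hlt
    exact absurd (hlt.trans_le hle) (lt_irrefl 1)
end

section
/- In a real Hilbert space E, for every nonzero α and every h, the second-order Taylor remainder of the norm satisfies |‖α + h‖ - ‖α‖ - ⟨α/‖α‖, h⟩ - (1/2)(‖h‖² - ⟨α, h⟩²/‖α‖²)/‖α‖| ≤ (1/2) min(‖h‖²/‖α‖, ‖h‖³/‖α‖²). -/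
open scoped RealInnerProductSpace

lemma aux16 (a n t N : ℝ) (ha : 0 < a) (hn : 0 ≤ n)
    (hN : N ^ 2 = a ^ 2 + 2 * t + n ^ 2)
    (ht : |t| ≤ a * n) (htri : |a - N| ≤ n) :
    |N - a - t / a - (1 / 2) * ((n ^ 2 - t ^ 2 / a ^ 2) / a)| ≤
      (1 / 2) * min (n ^ 2 / a) (n ^ 3 / a ^ 2) := by
  have ha' : a ≠ 0 := ne_of_gt ha
  set x : ℝ := a - N with hx
  set y : ℝ := t / a with hy
  have hty : t = a * y := by rw [hy]; field_simp
  have hN' : N ^ 2 = a ^ 2 + 2 * (a * y) + n ^ 2 := by rw [← hty]; exact hN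
  have hyabs : |y| ≤ n := by
    rw [hy, abs_div, abs_of_pos ha, div_le_iff₀ ha]
    linarith [ht]
  have hxlo := (abs_le.mp htri).1
  have hxhi := (abs_le.mp htri).2
  have hylo := (abs_le.mp hyabs).1
  have hyhi := (abs_le.mp hyabs).2
  have hrel : 2 * a * (x + y) = x ^ 2 - n ^ 2 := by
    rw [hx]; linear_combination -hN'
  have key : N - a - t / a - (1 / 2) * ((n ^ 2 - t ^ 2 / a ^ 2) / a)
      = (y ^ 2 - x ^ 2) / (2 * a) := by
    rw [hty, hx]
    field_simp
    linear_combination hN'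
  rw [key]
  have h1 : 0 ≤ n ^ 2 - x ^ 2 := by nlinarith
  have habs1 : |y ^ 2 - x ^ 2| ≤ n ^ 2 :=
    abs_le.mpr ⟨by nlinarith, by nlinarith⟩
  have hprod : 2 * a * (x + y) * (x - y) = (x ^ 2 - n ^ 2) * (x - y) := by
    rw [hrel]
  have habs2 : |y ^ 2 - x ^ 2| ≤ n ^ 3 / a := by
    refine abs_le.mpr ⟨?_, ?_⟩
    · rw [neg_le, ← neg_sub, le_div_iff₀ ha]
      nlinarith [mul_nonneg h1 (by linarith : (0:ℝ) ≤ 2 * n + (x - y)),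
        mul_nonneg hn (sq_nonneg x), hprod]
    · rw [le_div_iff₀ ha]
      nlinarith [mul_nonneg h1 (by linarith : (0:ℝ) ≤ 2 * n - (x - y)),
        mul_nonneg hn (sq_nonneg x), hprod]
  rw [abs_div, abs_of_pos (by linarith : (0:ℝ) < 2 * a)]
  rw [mul_min_of_nonneg _ _ (by norm_num : (0:ℝ) ≤ 1 / 2)]
  apply le_min
  · rw [div_le_iff₀ (by linarith : (0:ℝ) < 2 * a)]
    calc |y ^ 2 - x ^ 2| ≤ n ^ 2 := habs1
      _ = 1 / 2 * (n ^ 2 / a) * (2 * a) := by field_simp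
  · rw [div_le_iff₀ (by linarith : (0:ℝ) < 2 * a)]
    calc |y ^ 2 - x ^ 2| ≤ n ^ 3 / a := habs2
      _ = 1 / 2 * (n ^ 3 / a ^ 2) * (2 * a) := by field_simp

/-- Second-order Taylor remainder bound for the norm in a real inner product space. -/
theorem stmt16 {E : Type*} [NormedAddCommGroup E] [InnerProductSpace ℝ E]
    (α h : E) (hα : α ≠ 0) :
    |‖α + h‖ - ‖α‖ - ⟪α, h⟫ / ‖α‖ -
        (1 / 2) * ((‖h‖ ^ 2 - ⟪α, h⟫ ^ 2 / ‖α‖ ^ 2) / ‖α‖)| ≤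
      (1 / 2) * min (‖h‖ ^ 2 / ‖α‖) (‖h‖ ^ 3 / ‖α‖ ^ 2) := by
  have ha : 0 < ‖α‖ := norm_pos_iff.mpr hα
  have hN : ‖α + h‖ ^ 2 = ‖α‖ ^ 2 + 2 * ⟪α, h⟫ + ‖h‖ ^ 2 := by
    rw [@norm_add_sq_real]
  have ht : |⟪α, h⟫| ≤ ‖α‖ * ‖h‖ := abs_real_inner_le_norm α h
  have htri : |‖α‖ - ‖α + h‖| ≤ ‖h‖ := by
    have := abs_norm_sub_norm_le α (α + h)
    simpa [norm_sub_rev] using this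
  exact aux16 ‖α‖ ‖h‖ ⟪α, h⟫ ‖α + h‖ ha (norm_nonneg h) hN ht htri
end

section
/- In a real Hilbert space E, for every nonzero α and every h with α + h ≠ 0, the first-order Taylor remainder of the gradient of the norm satisfies ‖(α+h)/‖α+h‖ - α/‖α‖ - ∇²N(α)h‖ ≤ 2 min(‖h‖/‖α‖, ‖h‖²/‖α‖²), where ∇²N(α)h = (h - ⟨h,α⟩α/‖α‖²)/‖α‖. -/
open scoped RealInnerProductSpace

theorem key_poly (a b s : ℝ) (hsa : s ≤ a) (hb1 : a - s ≤ b) (hb2 : b ≤ a + s) :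
    b*a^2*(a-b)^2 + 2*(a-b)*((b^2-a^2-s^2)/2)*(a^2+(b^2-a^2-s^2)/2)
      + ((b^2-a^2-s^2)/2)^2*b ≤ 4*s^4*b := by
  have hu : 0 ≤ b - (a - s) := by linarith
  have hv : 0 ≤ (a + s) - b := by linarith
  have hw : 0 ≤ a - s := by linarith
  nlinarith [mul_nonneg (pow_nonneg hv 4) hw,
    mul_nonneg (mul_nonneg hu (pow_nonneg hv 3)) hw,
    mul_nonneg hu (pow_nonneg hv 4),
    mul_nonneg (mul_nonneg (pow_nonneg hu 2) (pow_nonneg hv 2)) hw,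
    mul_nonneg (pow_nonneg hu 2) (pow_nonneg hv 3),
    mul_nonneg (mul_nonneg (pow_nonneg hu 3) hv) hw,
    mul_nonneg (pow_nonneg hu 3) (pow_nonneg hv 2),
    mul_nonneg (pow_nonneg hu 4) hw,
    mul_nonneg (pow_nonneg hu 4) hv,
    pow_nonneg hu 5]

/-- First-order Taylor remainder bound for the gradient of the norm in a real inner product
space. -/
theorem stmt17 {E : Type*} [NormedAddCommGroup E] [InnerProductSpace ℝ E]
    (α h : E) (hα : α ≠ 0) (hαh : α + h ≠ 0) :
    ‖‖α + h‖⁻¹ • (α + h) - ‖α‖⁻¹ • α -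
        ‖α‖⁻¹ • (h - (⟪h, α⟫ / ‖α‖ ^ 2) • α)‖ ≤
      2 * min (‖h‖ / ‖α‖) (‖h‖ ^ 2 / ‖α‖ ^ 2) := by
  set a : ℝ := ‖α‖ with ha_def
  set b : ℝ := ‖α + h‖ with hb_def
  set s : ℝ := ‖h‖ with hs_def
  set t : ℝ := ⟪h, α⟫ with ht_def
  have ha : 0 < a := norm_pos_iff.2 hα
  have hb : 0 < b := norm_pos_iff.2 hαh
  have hs : 0 ≤ s := norm_nonneg h
  have hab : |a - b| ≤ s := by
    have := abs_norm_sub_norm_le α (α + h)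
    simpa [← hs_def, ← ha_def, ← hb_def, norm_sub_rev] using this
  have hT : |t| ≤ s * a := by
    have := abs_real_inner_le_norm h α
    simpa [← ht_def, ← hs_def, ← ha_def] using this
  have hbt : b ^ 2 = a ^ 2 + 2 * t + s ^ 2 := by
    have h2 := @norm_add_sq_real E _ _ α h
    rw [real_inner_comm] at h2
    simp only [← ha_def, ← hb_def, ← hs_def, ← ht_def] at h2
    linarith
  set V : E := ‖α + h‖⁻¹ • (α + h) - ‖α‖⁻¹ • α - ‖α‖⁻¹ • (h - (⟪h, α⟫ / ‖α‖ ^ 2) • α)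
    with hV_def
  -- linear bound, always valid
  have hlin : ‖V‖ ≤ 2 * (s / a) := by
    have hV1 : V = (b⁻¹ - a⁻¹) • (α + h) + (t / a ^ 3) • α := by
      rw [hV_def, ht_def, ha_def, hb_def]
      match_scalars
      · field_simp
        ring
      · field_simp
    have e1 : ‖(b⁻¹ - a⁻¹) • (α + h)‖ ≤ s / a := by
      rw [norm_smul, Real.norm_eq_abs, ← hb_def,
        show b⁻¹ - a⁻¹ = (a - b) / (a * b) by field_simp,
        abs_div, abs_of_pos (mul_pos ha hb), div_mul_eq_mul_div,
        div_le_div_iff₀ (by positivity) ha]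
      nlinarith [mul_le_mul_of_nonneg_right hab (mul_pos ha hb).le]
    have e2 : ‖(t / a ^ 3) • α‖ ≤ s / a := by
      rw [norm_smul, Real.norm_eq_abs, ← ha_def, abs_div,
        abs_of_pos (by positivity : (0:ℝ) < a ^ 3), div_mul_eq_mul_div,
        div_le_div_iff₀ (by positivity) ha]
      nlinarith [mul_le_mul_of_nonneg_right hT (mul_pos ha ha).le]
    calc ‖V‖ ≤ ‖(b⁻¹ - a⁻¹) • (α + h)‖ + ‖(t / a ^ 3) • α‖ := by
          rw [hV1]; exact norm_add_le _ _
      _ ≤ s / a + s / a := add_le_add e1 e2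
      _ = 2 * (s / a) := by ring
  rcases le_total (s / a) (s ^ 2 / a ^ 2) with hc | hc
  · rw [min_eq_left hc]; exact hlin
  · rw [min_eq_right hc]
    by_cases hh : h = 0
    · have hV0 : V = 0 := by simp [hV_def, hh]
      rw [hV0]
      simp only [norm_zero]
      positivity
    · have hs0 : 0 < s := norm_pos_iff.2 hh
      have hsa : s ≤ a := by
        rw [div_le_div_iff₀ (by positivity) (by positivity)] at hc
        nlinarith [mul_pos hs0 ha]
      have hb1 : a - s ≤ b := by have := abs_le.1 hab; linarith [this.2]
      have hb2 : b ≤ a + s := by have := abs_le.1 hab; linarith [this.1]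
      have ht_eq : t = (b ^ 2 - a ^ 2 - s ^ 2) / 2 := by linarith
      have hV2 : V = ((a - b) / (a * b) + t / a ^ 3) • α + ((a - b) / (a * b)) • h := by
        rw [hV_def, ht_def, ha_def, hb_def]
        match_scalars <;> field_simp <;>
          first | exact Or.inl (by ring) | exact Or.inl trivial | ring
      have hVsq : ‖V‖ ^ 2 = ((a - b) / (a * b) + t / a ^ 3) ^ 2 * a ^ 2
          + 2 * (((a - b) / (a * b) + t / a ^ 3) * ((a - b) / (a * b))) * t
          + ((a - b) / (a * b)) ^ 2 * s ^ 2 := by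
        have hti : (⟪α, h⟫ : ℝ) = t := by
          rw [ht_def]; exact real_inner_comm h α
        rw [hV2, @norm_add_sq_real, real_inner_smul_left, real_inner_smul_right, hti]
        simp only [norm_smul, Real.norm_eq_abs, ← ha_def, ← hs_def]
        rw [mul_pow, mul_pow, sq_abs, sq_abs]
        ring
      have hkey : ‖V‖ ^ 2 ≤ (2 * (s ^ 2 / a ^ 2)) ^ 2 := by
        rw [hVsq]
        have hpos : (0:ℝ) < a ^ 4 * b := by positivity
        rw [← mul_le_mul_iff_of_pos_right hpos]
        have hs2 : s ^ 2 = b ^ 2 - a ^ 2 - 2 * t := by linarith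
        have h1 : (((a - b) / (a * b) + t / a ^ 3) ^ 2 * a ^ 2
            + 2 * (((a - b) / (a * b) + t / a ^ 3) * ((a - b) / (a * b))) * t
            + ((a - b) / (a * b)) ^ 2 * s ^ 2) * (a ^ 4 * b)
            = b*a^2*(a-b)^2 + 2*(a-b)*t*(a^2+t) + t^2*b := by
          rw [hs2]; field_simp; ring
        have h2 : (2 * (s ^ 2 / a ^ 2)) ^ 2 * (a ^ 4 * b) = 4 * s ^ 4 * b := by
          field_simp; ring
        rw [h1, h2, ht_eq]
        exact key_poly a b s hsa hb1 hb2
      have hfin := Real.sqrt_le_sqrt hkey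
      rwa [Real.sqrt_sq (norm_nonneg _), Real.sqrt_sq (by positivity)] at hfin
end

section
/- Let Y₁, Y₂, … be i.i.d. nonnegative random variables with E[Y₁] < ∞. Then (1/n) Σ_{i=1}^n 1{Y_i ≥ √n} Y_i converges to 0 almost surely. -/
open MeasureTheory Filter

/-- For i.i.d. nonnegative integrable `Y₁, Y₂, …`, the truncated averages
`(1/n) Σ_{i<n} 1{Y_i ≥ √n} Y_i` converge to `0` almost surely. -/
theorem stmt19 {Ω : Type*} [MeasurableSpace Ω] (P : Measure Ω) [IsProbabilityMeasure P]
    (Y : ℕ → Ω → ℝ) (hmeas : ∀ i, Measurable (Y i))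
    (hindep : ProbabilityTheory.iIndepFun Y P)
    (hid : ∀ i, ProbabilityTheory.IdentDistrib (Y i) (Y 0) P P)
    (hnonneg : ∀ i ω, 0 ≤ Y i ω)
    (hint : Integrable (Y 0) P) :
    ∀ᵐ ω ∂P, Tendsto
      (fun n : ℕ => (1 / (n : ℝ)) * ∑ i ∈ Finset.range n,
        (if Real.sqrt n ≤ Y i ω then Y i ω else 0))
      atTop (nhds 0) := by
  set g : ℕ → ℝ → ℝ := fun k x => if (k : ℝ) ≤ x then x else 0 with hg_def
  have hgmeas : ∀ k, Measurable (g k) := fun k =>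
    Measurable.ite (measurableSet_le measurable_const measurable_id)
      measurable_id measurable_const
  have hgabs : ∀ k x, |g k x| ≤ |x| := by
    intro k x
    by_cases h : (k : ℝ) ≤ x <;> simp [g, h, abs_nonneg]
  have hint' : ∀ k, Integrable (fun ω => g k (Y 0 ω)) P := fun k =>
    hint.mono ((hgmeas k).comp (hmeas 0)).aestronglyMeasurable
      (ae_of_all _ fun ω => by simpa using hgabs k (Y 0 ω))
  -- strong law for each truncation level k
  have hslln : ∀ k, ∀ᵐ ω ∂P, Tendsto
      (fun n : ℕ => (∑ i ∈ Finset.range n, g k (Y i ω)) / n) atTop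
      (nhds (∫ ω, g k (Y 0 ω) ∂P)) := fun k =>
    ProbabilityTheory.strong_law_ae_real _ (hint' k)
      (fun i j hij => ((hindep.indepFun hij).comp (hgmeas k) (hgmeas k)))
      (fun i => (hid i).comp (hgmeas k))
  -- the expectations tend to 0
  have hE : Tendsto (fun k => ∫ ω, g k (Y 0 ω) ∂P) atTop (nhds 0) := by
    have h0 : (0 : ℝ) = ∫ ω, (0 : ℝ) ∂P := by simp
    rw [h0]
    apply tendsto_integral_of_dominated_convergence (fun ω => |Y 0 ω|)
      (fun k => ((hgmeas k).comp (hmeas 0)).aestronglyMeasurable)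
      hint.abs
      (fun k => ae_of_all _ fun ω => by simpa using hgabs k (Y 0 ω))
    refine ae_of_all _ fun ω => ?_
    have : ∀ᶠ k : ℕ in atTop, g k (Y 0 ω) = 0 := by
      filter_upwards [eventually_gt_atTop ⌈Y 0 ω⌉₊] with k hk
      have : ¬ ((k : ℝ) ≤ Y 0 ω) := by
        push_neg
        calc Y 0 ω ≤ (⌈Y 0 ω⌉₊ : ℝ) := Nat.le_ceil _
        _ < k := by exact_mod_cast hk
      simp [g, this]
    exact Tendsto.congr' (this.mono fun k hk => hk.symm) tendsto_const_nhds
  filter_upwards [ae_all_iff.2 hslln] with ω hω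
  rw [tendsto_order]
  have hZnonneg : ∀ n : ℕ, 0 ≤ (1 / (n : ℝ)) * ∑ i ∈ Finset.range n,
      (if Real.sqrt n ≤ Y i ω then Y i ω else 0) := by
    intro n
    apply mul_nonneg (by positivity)
    apply Finset.sum_nonneg
    intro i _
    by_cases h : Real.sqrt n ≤ Y i ω <;> simp [h, hnonneg i ω]
  constructor
  · intro a ha
    exact Eventually.of_forall fun n => lt_of_lt_of_le ha (hZnonneg n)
  · intro a ha
    obtain ⟨k, hk⟩ : ∃ k, ∫ ω, g k (Y 0 ω) ∂P < a :=
      (hE.eventually_lt_const ha).exists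
    filter_upwards [(hω k).eventually_lt_const hk, eventually_ge_atTop (k * k),
      eventually_ge_atTop 1] with n h1 h2 h3
    have hksqrt : (k : ℝ) ≤ Real.sqrt n := by
      rw [show ((k : ℝ)) = Real.sqrt ((k : ℝ) ^ 2) from
        (Real.sqrt_sq (Nat.cast_nonneg k)).symm]
      apply Real.sqrt_le_sqrt
      have : ((k : ℝ)) ^ 2 = ((k * k : ℕ) : ℝ) := by push_cast; ring
      rw [this]
      exact_mod_cast h2
    have hle : (1 / (n : ℝ)) * ∑ i ∈ Finset.range n,
        (if Real.sqrt n ≤ Y i ω then Y i ω else 0)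
        ≤ (∑ i ∈ Finset.range n, g k (Y i ω)) / n := by
      calc (1 / (n : ℝ)) * ∑ i ∈ Finset.range n,
            (if Real.sqrt n ≤ Y i ω then Y i ω else 0)
          ≤ (1 / (n : ℝ)) * ∑ i ∈ Finset.range n, g k (Y i ω) := by
            apply mul_le_mul_of_nonneg_left _ (by positivity)
            apply Finset.sum_le_sum
            intro i _
            by_cases h : Real.sqrt n ≤ Y i ω
            · have hky : (k : ℝ) ≤ Y i ω := le_trans hksqrt h
              simp [g, h, hky]
            · by_cases h' : (k : ℝ) ≤ Y i ω <;> simp [g, h, h', hnonneg i ω]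
        _ = (∑ i ∈ Finset.range n, g k (Y i ω)) / n := one_div_mul_eq_div _ _
    exact lt_of_le_of_lt hle h1
end
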